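/- arXiv:2404.04185 — 8 statements merged into one kernel-verified Lean document; each statement's English description precedes it below -/
import Mathlib

section
/- Let A be a C*-algebra, J ⊆ A a closed two-sided ideal, and M a Hilbert C*-module over A. Let f : M → A be a bounded additive map that is anti-A-linear (f(m·a) = a*·f(m) for all m ∈ M, a ∈ A) and suppose that for every x ∈ J there exists an element m_x ∈ M with f(m)·x = ⟪m, m_x⟫ for all m ∈ M. Then for every x ∈ J, any such representing element m_x lies in M_J. (This expresses the identity (M^J)_J = M_J: every functional in M_1(J) multiplied by an element of J is represented by an element of M_J.) -/
open scoped RightActions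

/-- The Hilbert C⋆-module class as it stood in Mathlib of December 2024 (right `A`-action via
`Aᵐᵒᵖ`, inner product `A`-linear on the right); Mathlib's `CStarModule` now uses a left action. -/
class OldCStarModule (A : outParam <| Type*) (E : Type*) [NonUnitalSemiring A] [StarRing A]
    [Module ℂ A] [AddCommGroup E] [Module ℂ E] [PartialOrder A] [SMul Aᵐᵒᵖ E] [Norm A] [Norm E]
    extends Inner A E where
  inner_add_right {x} {y} {z} : inner x (y + z) = inner x y + inner x z
  inner_self_nonneg {x} : 0 ≤ inner x x
  inner_self {x} : inner x x = 0 ↔ x = 0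
  inner_op_smul_right {a : A} {x y : E} : inner x (y <• a) = inner x y * a
  inner_smul_right_complex {z : ℂ} {x} {y} : inner x (z • y) = z • inner x y
  star_inner x y : star (inner x y) = inner y x
  norm_eq_sqrt_norm_inner_self x : ‖x‖ = √‖inner x x‖

/-- `M_J`: the closure in `E` of the set of finite sums `Σᵢ mᵢ·xᵢ` with `mᵢ ∈ E`, `xᵢ ∈ J`. -/
def idealSubmodule {A : Type*} [NonUnitalCStarAlgebra A]
    (J : TwoSidedIdeal A) (E : Type*) [NormedAddCommGroup E] [SMul Aᵐᵒᵖ E] : Set E :=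
  closure (AddSubmonoid.closure {y : E | ∃ m : E, ∃ x ∈ J, y = m <• x} : Set E)

theorem OldCStarModule.norm_sq_eq' {A : Type*} [NonUnitalCStarAlgebra A] [PartialOrder A]
    {E : Type*} [NormedAddCommGroup E] [Module ℂ E] [SMul Aᵐᵒᵖ E] [OldCStarModule A E]
    (x : E) : ‖x‖ ^ 2 = ‖(inner A x x : A)‖ := by
  rw [OldCStarModule.norm_eq_sqrt_norm_inner_self x, Real.sq_sqrt (norm_nonneg _)]

theorem OldCStarModule.inner_sub_right' {A : Type*} [NonUnitalCStarAlgebra A] [PartialOrder A]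
    {E : Type*} [NormedAddCommGroup E] [Module ℂ E] [SMul Aᵐᵒᵖ E] [OldCStarModule A E]
    (x y z : E) : (inner A x (y - z) : A) = inner A x y - inner A x z := by
  let φ : E →+ A := AddMonoidHom.mk' (fun y => (inner A x y : A))
    (fun y z => OldCStarModule.inner_add_right)
  exact map_sub φ y z

theorem OldCStarModule.inner_sub_left' {A : Type*} [NonUnitalCStarAlgebra A] [PartialOrder A]
    {E : Type*} [NormedAddCommGroup E] [Module ℂ E] [SMul Aᵐᵒᵖ E] [OldCStarModule A E]
    (x y z : E) : (inner A (x - y) z : A) = inner A x z - inner A y z := by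
  rw [← OldCStarModule.star_inner z (x - y), OldCStarModule.inner_sub_right', star_sub,
    OldCStarModule.star_inner, OldCStarModule.star_inner]

theorem OldCStarModule.inner_op_smul_left' {A : Type*} [NonUnitalCStarAlgebra A] [PartialOrder A]
    {E : Type*} [NormedAddCommGroup E] [Module ℂ E] [SMul Aᵐᵒᵖ E] [OldCStarModule A E]
    (a : A) (x y : E) : (inner A (x <• a) y : A) = star a * inner A x y := by
  rw [← OldCStarModule.star_inner y (x <• a), OldCStarModule.inner_op_smul_right, star_mul,
    OldCStarModule.star_inner]

/-- If `f : M → A` is a bounded additive anti-`A`-linear functional on a Hilbert C*-module `M`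
over `A`, and for every `x` in the closed two-sided ideal `J ⊆ A` the functional `f·x` is
represented by an element of `M`, then every such representing element lies in `M_J`
(this expresses `(M^J)_J = M_J`). -/
theorem rep_mem_idealSubmodule
    {A : Type*} [NonUnitalCStarAlgebra A] [PartialOrder A] [StarOrderedRing A]
    {E : Type*} [NormedAddCommGroup E] [Module ℂ E] [SMul Aᵐᵒᵖ E] [OldCStarModule A E]
    [CompleteSpace E]
    (J : TwoSidedIdeal A) (hJclosed : IsClosed (J : Set A))
    (f : E → A)
    (hf_add : ∀ m n : E, f (m + n) = f m + f n)
    (hf_bdd : ∃ C : ℝ, ∀ m : E, ‖f m‖ ≤ C * ‖m‖)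
    (hf_antilin : ∀ (m : E) (a : A), f (m <• a) = star a * f m)
    (hrep : ∀ x ∈ J, ∃ mx : E, ∀ m : E, f m * x = (inner A m mx : A))
    (x : A) (hx : x ∈ J) (mx : E) (hmx : ∀ m : E, f m * x = (inner A m mx : A)) :
    mx ∈ idealSubmodule J E := by
  set a : A := inner A mx mx with ha_def
  have ha0 : 0 ≤ a := OldCStarModule.inner_self_nonneg
  have ha_sa : IsSelfAdjoint a := .of_nonneg ha0
  have haJ : a ∈ J := by
    rw [ha_def, ← hmx mx]; exact J.mul_mem_left _ _ hx
  have hσ : ∀ t ∈ quasispectrum ℝ a, 0 ≤ t := quasispectrum_nonneg_of_nonneg a ha0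
  -- the functions
  set g : ℕ → ℝ → ℝ := fun n t => (n + 1 : ℝ) * t / (1 + (n + 1 : ℝ) * t) with hg_def
  have hden : ∀ n : ℕ, ∀ t ∈ quasispectrum ℝ a, (1 + (n + 1 : ℝ) * t) ≠ 0 := by
    intro n t ht
    have := hσ t ht
    positivity
  have hgc : ∀ n : ℕ, ContinuousOn (g n) (quasispectrum ℝ a) := fun n =>
    (continuousOn_const.mul continuousOn_id).div
      (continuousOn_const.add (continuousOn_const.mul continuousOn_id)) (hden n)
  have hg0 : ∀ n : ℕ, g n 0 = 0 := by intro n; simp [hg_def]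
  set b : ℕ → A := fun n => cfcₙ (g n) a with hb_def
  have hb_sa : ∀ n, IsSelfAdjoint (b n) := fun n => cfcₙ_predicate (g n) a
  -- b n ∈ J
  have hbJ : ∀ n, b n ∈ J := by
    intro n
    set h : ℝ → ℝ := fun t : ℝ => (n + 1 : ℝ) / (1 + (n + 1 : ℝ) * t) - (n + 1 : ℝ) with hh_def
    have hk : ContinuousOn h (quasispectrum ℝ a) :=
      (continuousOn_const.div
        (continuousOn_const.add (continuousOn_const.mul (continuousOn_id' _))) (hden n)).sub
        continuousOn_const
    have h1 : (quasispectrum ℝ a).EqOn (g n)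
        (fun t : ℝ => ((n + 1 : ℝ) * t) + (t * h t)) := by
      intro t ht
      have := hden n t ht
      simp only [hg_def, hh_def]
      field_simp
      ring
    have e0 : b n = cfcₙ (fun t : ℝ => ((n + 1 : ℝ) * t) + (t * h t)) a := cfcₙ_congr h1
    have e1 : cfcₙ (fun t : ℝ => ((n + 1 : ℝ) * t) + (t * h t)) a
        = cfcₙ (fun t : ℝ => (n + 1 : ℝ) * t) a + cfcₙ (fun t : ℝ => t * h t) a :=
      cfcₙ_add (f := fun t : ℝ => (n + 1 : ℝ) * t) (g := fun t : ℝ => t * h t) (a := a)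
        (by fun_prop) (by simp) ((continuousOn_id' _).mul hk) (by simp [hh_def])
    have e2 : cfcₙ (fun t : ℝ => t * h t) a = a * cfcₙ h a := by
      rw [cfcₙ_mul (f := fun t : ℝ => t) (g := h) (a := a) (continuousOn_id' _) rfl hk
        (by simp [hh_def]), cfcₙ_id' ℝ a]
    have e3 : cfcₙ (fun t : ℝ => (n + 1 : ℝ) * t) a = (n + 1 : ℕ) • a := by
      rw [show cfcₙ (fun t : ℝ => (n + 1 : ℝ) * t) a = ((n + 1 : ℝ)) • a from
        cfcₙ_const_mul_id _ a, ← Nat.cast_smul_eq_nsmul ℝ]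
      norm_num
    rw [e0, e1, e2, e3]
    exact J.add_mem (nsmul_mem haJ _) (J.mul_mem_right a _ haJ)
  -- the norm estimate
  have hnorm : ∀ n : ℕ, ‖mx - mx <• b n‖ ^ 2 ≤ 1 / (n + 1 : ℝ) := by
    intro n
    rw [OldCStarModule.norm_sq_eq']
    have hinner : (inner A (mx - mx <• b n) (mx - mx <• b n) : A)
        = a - a * b n - b n * a + b n * a * b n := by
      simp only [OldCStarModule.inner_sub_right', OldCStarModule.inner_sub_left',
        OldCStarModule.inner_op_smul_right, OldCStarModule.inner_op_smul_left',
        (hb_sa n).star_eq, ← ha_def]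
      noncomm_ring
    rw [hinner]
    have hF : a - a * b n - b n * a + b n * a * b n
        = cfcₙ (fun t : ℝ => t - t * g n t - g n t * t + g n t * t * g n t) a := by
      have c1 : ContinuousOn (fun t : ℝ => t - t * g n t) (quasispectrum ℝ a) :=
        (continuousOn_id' _).sub ((continuousOn_id' _).mul (hgc n))
      have c2 : ContinuousOn (fun t : ℝ => t - t * g n t - g n t * t) (quasispectrum ℝ a) :=
        c1.sub ((hgc n).mul (continuousOn_id' _))
      have c3 : ContinuousOn (fun t : ℝ => g n t * t) (quasispectrum ℝ a) :=
        (hgc n).mul (continuousOn_id' _)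
      rw [cfcₙ_add (f := fun t : ℝ => t - t * g n t - g n t * t)
          (g := fun t : ℝ => g n t * t * g n t) (a := a) c2 (by simp [hg0 n])
          ((c3.mul (hgc n))) (by simp [hg0 n]),
        cfcₙ_sub (f := fun t : ℝ => t - t * g n t) (g := fun t : ℝ => g n t * t) (a := a)
          c1 (by simp [hg0 n]) c3 (by simp [hg0 n]),
        cfcₙ_sub (f := fun t : ℝ => t) (g := fun t : ℝ => t * g n t) (a := a)
          (continuousOn_id' _) rfl ((continuousOn_id' _).mul (hgc n)) (by simp [hg0 n]),
        cfcₙ_mul (f := fun t : ℝ => t) (g := g n) (a := a) (continuousOn_id' _) rfl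
          (hgc n) (hg0 n),
        cfcₙ_mul (f := g n) (g := fun t : ℝ => t) (a := a) (hgc n) (hg0 n)
          (continuousOn_id' _) rfl,
        cfcₙ_mul (f := fun t : ℝ => g n t * t) (g := g n) (a := a) c3 (by simp [hg0 n])
          (hgc n) (hg0 n),
        cfcₙ_mul (f := g n) (g := fun t : ℝ => t) (a := a) (hgc n) (hg0 n)
          (continuousOn_id' _) rfl,
        cfcₙ_id' ℝ a]
    rw [hF]
    refine norm_cfcₙ_le fun t ht => ?_
    have ht0 := hσ t ht
    have hd : (0:ℝ) < 1 + (n + 1 : ℝ) * t := by positivity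
    have hgt : g n t = (n + 1 : ℝ) * t / (1 + (n + 1 : ℝ) * t) := rfl
    have h1g : 1 - g n t = 1 / (1 + (n + 1 : ℝ) * t) := by
      rw [hgt]; field_simp; ring
    have hFt : t - t * g n t - g n t * t + g n t * t * g n t = t * (1 - g n t) ^ 2 := by ring
    rw [hFt, h1g]
    have hval : t * (1 / (1 + (n + 1 : ℝ) * t)) ^ 2 ≤ 1 / (n + 1 : ℝ) := by
      have heq : t * (1 / (1 + (n + 1 : ℝ) * t)) ^ 2 = t / (1 + (n + 1 : ℝ) * t) ^ 2 := by
        field_simp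
      rw [heq, div_le_div_iff₀ (by positivity) (by positivity)]
      nlinarith [sq_nonneg ((n+1:ℝ) * t), mul_nonneg (mul_nonneg ht0 ht0) (Nat.cast_nonneg n)]
    have hval0 : (0:ℝ) ≤ t * (1 / (1 + (n + 1 : ℝ) * t)) ^ 2 := by positivity
    rw [Real.norm_eq_abs, abs_of_nonneg hval0]
    exact hval
  -- convergence
  have htend : Filter.Tendsto (fun n : ℕ => mx <• b n) Filter.atTop (nhds mx) := by
    rw [tendsto_iff_norm_sub_tendsto_zero]
    have hb0 : ∀ n : ℕ, ‖mx <• b n - mx‖ ≤ Real.sqrt (1 / (n + 1 : ℝ)) := by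
      intro n
      rw [← norm_neg, neg_sub]
      have h2 := hnorm n
      have := norm_nonneg (mx - mx <• b n)
      nlinarith [Real.sq_sqrt (show (0:ℝ) ≤ 1 / (n + 1 : ℝ) by positivity),
        Real.sqrt_nonneg (1 / (n + 1 : ℝ))]
    have hs : Filter.Tendsto (fun n : ℕ => Real.sqrt (1 / (n + 1 : ℝ)))
        Filter.atTop (nhds 0) := by
      rw [show (0:ℝ) = Real.sqrt 0 by simp]
      exact (tendsto_one_div_add_atTop_nhds_zero_nat).sqrt
    exact squeeze_zero (fun n => norm_nonneg _) hb0 hs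
  refine mem_closure_of_tendsto htend (Filter.Eventually.of_forall fun n => ?_)
  exact AddSubmonoid.subset_closure ⟨mx, b n, hbJ n, rfl⟩
end

section
/- Let A be a C*-algebra, J ⊆ A an essential ideal, and let M, N be Hilbert C*-modules over A. If T : M → N is a J-adjointable A-operator, then its restriction T|_{M_J} : M_J → N_J is adjointable: there exists an A-operator S : N_J → M_J with ⟪S n, m⟫ = ⟪n, T m⟫ for all m ∈ M_J and n ∈ N_J. -/
open scoped RightActions

/-- The `CStarModule` class as it stood in Mathlib of December 2024: a right `Aᵐᵒᵖ`-action
and an inner product that is `A`-linear in the second variable. -/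
class RightCStarModule (A E : Type*) [NonUnitalSemiring A] [StarRing A] [Module ℂ A]
    [AddCommGroup E] [Module ℂ E] [PartialOrder A] [SMul Aᵐᵒᵖ E] [Norm A] [Norm E]
    extends Inner A E where
  inner_add_right {x} {y} {z} : inner x (y + z) = inner x y + inner x z
  inner_self_nonneg {x} : 0 ≤ inner x x
  inner_self {x} : inner x x = 0 ↔ x = 0
  inner_op_smul_right {a : A} {x y : E} : inner x (y <• a) = inner x y * a
  inner_smul_right_complex {z : ℂ} {x} {y} : inner x (z • y) = z • inner x y
  star_inner x y : star (inner x y) = inner y x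
  norm_eq_sqrt_norm_inner_self x : ‖x‖ = √‖inner x x‖

attribute [simp] RightCStarModule.inner_add_right RightCStarModule.star_inner
attribute [simp] RightCStarModule.inner_op_smul_right RightCStarModule.inner_smul_right_complex

namespace RightCStarModule

section Lib

variable {A : Type*} [NonUnitalCStarAlgebra A] [PartialOrder A] [StarOrderedRing A]
variable {E : Type*} [NormedAddCommGroup E] [Module ℂ E] [SMul Aᵐᵒᵖ E] [RightCStarModule A E]

@[simp]
lemma inner_add_left {x y z : E} : inner A (x + y) z = inner A x z + inner A y z := by
  rw [← star_star (r := inner A (x + y) z)]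
  simp only [inner_add_right, star_add, star_inner]

@[simp]
lemma inner_op_smul_left {a : A} {x y : E} : inner A (x <• a) y = star a * inner A x y := by
  rw [← star_inner]; simp

@[simp]
lemma inner_smul_left_complex {z : ℂ} {x y : E} : inner A (z • x) y = star z • inner A x y := by
  rw [← star_inner]
  simp

@[simp]
lemma inner_smul_left_real {z : ℝ} {x y : E} : inner A (z • x) y = z • inner A x y := by
  have h₁ : z • x = (z : ℂ) • x := by simp
  rw [h₁, ← star_inner, inner_smul_right_complex]
  simp

@[simp]
lemma inner_smul_right_real {z : ℝ} {x y : E} : inner A x (z • y) = z • inner A x y := by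
  have h₁ : z • y = (z : ℂ) • y := by simp
  rw [h₁, ← star_inner, inner_smul_left_complex]
  simp

@[simp] lemma inner_zero_right {x : E} : inner A x 0 = 0 := by
  have h := inner_add_right (A := A) (x := x) (y := (0 : E)) (z := 0)
  simpa using h

@[simp] lemma inner_zero_left {x : E} : inner A 0 x = 0 := by
  rw [← star_inner]; simp

@[simp] lemma inner_neg_right {x y : E} : inner A x (-y) = -inner A x y := by
  have h := inner_add_right (A := A) (x := x) (y := -y) (z := y)
  rw [neg_add_cancel, inner_zero_right] at h
  exact eq_neg_of_add_eq_zero_left h.symm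

@[simp] lemma inner_neg_left {x y : E} : inner A (-x) y = -inner A x y := by
  rw [← star_inner]; simp

@[simp] lemma inner_sub_right {x y z : E} : inner A x (y - z) = inner A x y - inner A x z := by
  simp [sub_eq_add_neg]

@[simp] lemma inner_sub_left {x y z : E} : inner A (x - y) z = inner A x z - inner A y z := by
  simp [sub_eq_add_neg]

lemma norm_sq_eq {x : E} : ‖x‖ ^ 2 = ‖inner A x x‖ := by
  rw [norm_eq_sqrt_norm_inner_self (A := A) x, Real.sq_sqrt (norm_nonneg _)]

lemma inner_mul_inner_swap_le {x y : E} : inner A y x * inner A x y ≤ ‖x‖ ^ 2 • inner A y y := by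
  rcases eq_or_ne x 0 with h | h
  · simp [h]
  · have h₁ : ∀ (a : A),
        (0 : A) ≤ ‖x‖ ^ 2 • (star a * a) - ‖x‖ ^ 2 • (inner A y x * a)
                  - ‖x‖ ^ 2 • (star a * inner A x y) + ‖x‖ ^ 2 • (‖x‖ ^ 2 • inner A y y) :=
        fun a => by
      calc (0 : A) ≤ inner A (x <• a - ‖x‖ ^ 2 • y) (x <• a - ‖x‖ ^ 2 • y) := by
                      exact inner_self_nonneg
            _ = star a * (inner A x x * a) - ‖x‖ ^ 2 • (inner A y x * a)
                  - ‖x‖ ^ 2 • (star a * inner A x y) + ‖x‖ ^ 2 • (‖x‖ ^ 2 • inner A y y) := by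
                      simp only [inner_sub_right, inner_op_smul_right, inner_sub_left,
                        inner_op_smul_left, inner_smul_left_real, mul_sub, mul_smul_comm,
                        inner_smul_right_real, smul_sub, mul_assoc, smul_mul_assoc, sub_mul]
                      abel
            _ ≤ ‖x‖ ^ 2 • (star a * a) - ‖x‖ ^ 2 • (inner A y x * a)
                  - ‖x‖ ^ 2 • (star a * inner A x y) + ‖x‖ ^ 2 • (‖x‖ ^ 2 • inner A y y) := by
                      gcongr
                      calc _ = star a * inner A x x * a := (mul_assoc _ _ _).symm
                        _ ≤ ‖inner A x x‖ • (star a * a) :=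
                          CStarAlgebra.star_left_conjugate_le_norm_smul (star_inner x x)
                        _ = (√‖inner A x x‖) ^ 2 • (star a * a) := by
                          rw [Real.sq_sqrt]
                          positivity
                        _ = ‖x‖ ^ 2 • (star a * a) := by
                          rw [← norm_eq_sqrt_norm_inner_self]
    specialize h₁ (inner A x y)
    simp only [star_inner, sub_self, zero_sub, le_neg_add_iff_add_le, add_zero] at h₁
    rwa [smul_le_smul_iff_of_pos_left (pow_pos (norm_pos_iff.mpr h) _)] at h₁

variable (E) in
lemma norm_inner_le {x y : E} : ‖inner A x y‖ ≤ ‖x‖ * ‖y‖ := by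
  have := calc ‖inner A x y‖ ^ 2 = ‖inner A y x * inner A x y‖ := by
                rw [← star_inner x y, CStarRing.norm_star_mul_self, pow_two]
    _ ≤ ‖‖x‖ ^ 2 • inner A y y‖ := by
                refine CStarAlgebra.norm_le_norm_of_nonneg_of_le ?_ inner_mul_inner_swap_le
                rw [← star_inner x y]
                exact star_mul_self_nonneg (inner A x y)
    _ = ‖x‖ ^ 2 * ‖inner A y y‖ := by simp [norm_smul]
    _ = ‖x‖ ^ 2 * ‖y‖ ^ 2 := by rw [norm_sq_eq (A := A) (x := y)]
    _ = (‖x‖ * ‖y‖) ^ 2 := by simp only [mul_pow]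
  refine (pow_le_pow_iff_left₀ (norm_nonneg (inner A x y)) ?_ (by simp)).mp this
  exact mul_nonneg (norm_nonneg _) (norm_nonneg _)

lemma normedSpaceCore (A : Type*) [NonUnitalCStarAlgebra A] [PartialOrder A] [StarOrderedRing A]
    [SMul Aᵐᵒᵖ E] [RightCStarModule A E] : NormedSpace.Core ℂ E where
  norm_nonneg _ := norm_nonneg _
  norm_eq_zero_iff x := norm_eq_zero
  norm_smul c x := by simp [norm_eq_sqrt_norm_inner_self (A := A), norm_smul, ← mul_assoc]
  norm_triangle x y := norm_add_le x y

end Lib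

end RightCStarModule

section Aux

set_option linter.unusedSectionVars false

variable {A : Type*} [NonUnitalCStarAlgebra A] [PartialOrder A] [StarOrderedRing A]

lemma aux_smul_mem_J (J : TwoSidedIdeal A) (hJclosed : IsClosed (J : Set A))
    (c : ℝ) {x : A} (hx : x ∈ J) : c • x ∈ J := by
  have hau := CStarAlgebra.increasingApproximateUnit A
  haveI : (CStarAlgebra.approximateUnit A).NeBot := hau.toIsApproximateUnit.neBot
  have h1 : Filter.Tendsto (fun u : A => (c • u) * x) (CStarAlgebra.approximateUnit A)
      (nhds (c • x)) := by
    simpa [smul_mul_assoc] using (hau.tendsto_mul_right x).const_smul c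
  exact hJclosed.mem_of_tendsto h1
    (Filter.Eventually.of_forall fun u => J.mul_mem_left (c • u) x hx)

set_option maxHeartbeats 1000000 in
lemma aux_factor (J : TwoSidedIdeal A) (hJclosed : IsClosed (J : Set A))
    {x : A} (hx : x ∈ J) {ε : ℝ} (hε : 0 < ε) : ∃ z ∈ J, ‖x - x * z‖ ≤ ε := by
  classical
  obtain ⟨a, hxa⟩ : ∃ a' : A, star x * x = a' := ⟨_, rfl⟩
  have haJ : a ∈ J := hxa ▸ J.mul_mem_left (star x) x hx
  have ha_nonneg : (0 : A) ≤ a := hxa ▸ star_mul_self_nonneg x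
  have ha_sa : IsSelfAdjoint a := hxa ▸ IsSelfAdjoint.star_mul_self x
  obtain ⟨M, hM⟩ : ∃ M : ℝ, ‖a‖ = M := ⟨_, rfl⟩
  have hM0 : 0 ≤ M := hM ▸ norm_nonneg a
  obtain ⟨c, hc_def⟩ : ∃ c : ℝ, (M + 1)⁻¹ = c := ⟨_, rfl⟩
  have hc_pos : 0 < c := hc_def ▸ by positivity
  obtain ⟨k, hk⟩ := exists_nat_ge ((M + 1) / (2 * ε ^ 2))
  have hk'pos : 0 < ((k + 1 : ℕ) : ℝ) := by positivity
  have hkbound : (M + 1) / (2 * ((k + 1 : ℕ) : ℝ)) ≤ ε ^ 2 := by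
    rw [div_le_iff₀ (by positivity)]
    have h2 : (M + 1) / (2 * ε ^ 2) ≤ ((k + 1 : ℕ) : ℝ) := le_trans hk (by push_cast; linarith)
    rw [div_le_iff₀ (by positivity)] at h2
    nlinarith
  obtain ⟨Z, hZ0, hZsucc⟩ : ∃ Z : ℕ → A, Z 0 = 0 ∧
      ∀ j, Z (j + 1) = c • a + Z j - c • (a * Z j) :=
    ⟨fun n => n.rec 0 (fun _ w => c • a + w - c • (a * w)), rfl, fun _ => rfl⟩
  have hZJ : ∀ j, Z j ∈ J := by
    intro j
    induction j with
    | zero => exact hZ0 ▸ J.zero_mem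
    | succ j ih =>
      rw [hZsucc]
      exact J.sub_mem (J.add_mem (aux_smul_mem_J J hJclosed c haJ) ih)
        (aux_smul_mem_J J hJclosed c (J.mul_mem_right a (Z j) haJ))
  -- pass to the unitization
  obtain ⟨p, hp⟩ : ∃ p : Unitization ℂ A, (1 : Unitization ℂ A) - c • (a : Unitization ℂ A) = p :=
    ⟨_, rfl⟩
  have hZ1 : ∀ j, (1 : Unitization ℂ A) - (Z j : Unitization ℂ A) = p ^ j := by
    intro j
    induction j with
    | zero => simp [hZ0]
    | succ j ih =>
      rw [hZsucc, pow_succ', ← ih, ← hp, Unitization.inr_sub, Unitization.inr_add,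
        Unitization.inr_smul, Unitization.inr_smul, Unitization.inr_mul]
      simp only [mul_sub, sub_mul, one_mul, mul_one, smul_mul_assoc]
      abel
  have hp_sa : IsSelfAdjoint p := by
    rw [← hp]
    have h1 : IsSelfAdjoint ((a : Unitization ℂ A)) := by
      rw [IsSelfAdjoint, ← Unitization.inr_star, ha_sa.star_eq]
    exact (IsSelfAdjoint.one _).sub (IsSelfAdjoint.smul (star_trivial c) h1)
  -- norm computation
  obtain ⟨j, hj⟩ : ∃ j : ℕ, j = k + 1 := ⟨_, rfl⟩
  have hjpos : 0 < (j:ℝ) := by rw [hj]; positivity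
  have hkb' : (M + 1) / (2 * (j:ℝ)) ≤ ε ^ 2 := by
    rw [hj]; exact_mod_cast hkbound
  refine ⟨Z j, hZJ _, ?_⟩
  have hxz : ((x - x * Z j : A) : Unitization ℂ A) = (x : Unitization ℂ A) * p ^ j := by
    rw [Unitization.inr_sub, Unitization.inr_mul, ← hZ1 j, mul_sub, mul_one]
  have hppow_sa : IsSelfAdjoint (p ^ j) := hp_sa.pow j
  have hnorm2 : ‖x - x * Z j‖ ^ 2 = ‖p ^ j * (a : Unitization ℂ A) * p ^ j‖ := by
    rw [← Unitization.norm_inr (𝕜 := ℂ) (x - x * Z j), hxz, sq,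
      ← CStarRing.norm_star_mul_self]
    congr 1
    rw [star_mul, hppow_sa.star_eq, ← Unitization.inr_star, mul_assoc,
      ← mul_assoc (Unitization.inr (star x)), ← Unitization.inr_mul, hxa, ← mul_assoc]
  have ha_sa' : IsSelfAdjoint ((a : Unitization ℂ A)) := by
    rw [IsSelfAdjoint, ← Unitization.inr_star, ha_sa.star_eq]
  -- identify with a polynomial in `a` via the continuous functional calculus
  have hcfc : p ^ j * (a : Unitization ℂ A) * p ^ j
      = cfc (fun t : ℝ => (1 - c * t) ^ j * t * (1 - c * t) ^ j) ((a : Unitization ℂ A)) := by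
    have hq := cfc_polynomial ((1 - Polynomial.C c * Polynomial.X) ^ j * Polynomial.X *
      (1 - Polynomial.C c * Polynomial.X) ^ j) ((a : Unitization ℂ A)) ha_sa'
    have heval : ((1 - Polynomial.C c * Polynomial.X) ^ j * Polynomial.X *
        (1 - Polynomial.C c * Polynomial.X) ^ j).eval
        = fun t : ℝ => (1 - c * t) ^ j * t * (1 - c * t) ^ j := by
      funext t; simp
    have haev : (Polynomial.aeval ((a : Unitization ℂ A)))
        ((1 - Polynomial.C c * Polynomial.X) ^ j * Polynomial.X *
          (1 - Polynomial.C c * Polynomial.X) ^ j) = p ^ j * (a : Unitization ℂ A) * p ^ j := by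
      rw [map_mul, map_mul, map_pow, map_sub, map_mul, map_one,
        Polynomial.aeval_C, Polynomial.aeval_X, ← Algebra.smul_def, hp]
    rw [heval] at hq
    rw [← haev, ← hq]
  have hc1 : c * (M + 1) = 1 := by
    rw [← hc_def]; field_simp
  -- spectral estimate
  have hbound : ‖p ^ j * (a : Unitization ℂ A) * p ^ j‖ ≤ (M + 1) / (2 * (j : ℝ)) := by
    rw [hcfc]
    refine norm_cfc_le (by positivity) fun t ht => ?_
    have htq : t ∈ quasispectrum ℝ a := by
      rw [Unitization.quasispectrum_eq_spectrum_inr' ℝ ℂ a]; exact ht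
    have ht0 : 0 ≤ t := quasispectrum_nonneg_of_nonneg a ha_nonneg t htq
    have htM : t ≤ M := by
      have := spectrum.norm_le_norm_of_mem ht
      rw [Unitization.norm_inr, hM] at this
      exact (le_abs_self t).trans (by rwa [Real.norm_eq_abs] at this)
    have hs0 : 0 ≤ c * t := by positivity
    have hs1 : c * t ≤ 1 := by nlinarith
    have hf : (1 - c * t) ^ j * t * (1 - c * t) ^ j = t * ((1 - c*t) * (1 - c*t)) ^ j := by
      rw [mul_pow]; ring
    have h1 : (0:ℝ) ≤ ((1 - c*t) * (1 - c*t)) ^ j := pow_nonneg (by nlinarith) _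
    have hft : (0:ℝ) ≤ t * ((1 - c*t) * (1 - c*t)) ^ j := mul_nonneg ht0 h1
    rw [hf, Real.norm_eq_abs, abs_of_nonneg hft]
    obtain ⟨s, hs_def⟩ : ∃ s' : ℝ, c * t = s' := ⟨_, rfl⟩
    rw [hs_def] at hs0 hs1 h1 ⊢
    have htt : t = s * (M + 1) := by
      calc t = t * (c * (M + 1)) := by rw [hc1, mul_one]
      _ = (c * t) * (M + 1) := by ring
      _ = s * (M + 1) := by rw [hs_def]
    have hpowsplit : ((1 - s) * (1 - s)) ^ j = (1 - s) ^ (2 * j) := by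
      rw [← sq, ← pow_mul]
    have hb : 1 + ((2 * j : ℕ) : ℝ) * s ≤ (1 + s) ^ (2 * j) :=
      one_add_mul_le_pow (by linarith) (2 * j)
    have h2 : ((1 + s) * (1 - s)) ^ (2 * j) ≤ 1 := by
      have h2a : (0:ℝ) ≤ (1 + s) * (1 - s) := by nlinarith
      have h2b : (1 + s) * (1 - s) ≤ 1 := by nlinarith
      exact pow_le_one₀ h2a h2b
    have hpw0 : (0:ℝ) ≤ (1 - s) ^ (2*j) := hpowsplit ▸ h1
    have hkey : 2 * (j:ℝ) * s * (1 - s) ^ (2*j) ≤ 1 := by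
      have hb' : (1 + 2 * (j:ℝ) * s) * (1 - s) ^ (2*j)
          ≤ (1 + s) ^ (2 * j) * (1 - s) ^ (2*j) := by
        refine mul_le_mul_of_nonneg_right ?_ hpw0
        have : ((2 * j : ℕ) : ℝ) = 2 * (j:ℝ) := by push_cast; ring
        linarith [hb, this ▸ hb]
      have hmp : (1 + s) ^ (2*j) * (1 - s) ^ (2*j) = ((1 + s) * (1 - s)) ^ (2*j) :=
        (mul_pow _ _ _).symm
      nlinarith [mul_nonneg hs0 hpw0]
    rw [hpowsplit, le_div_iff₀ (by positivity)]
    rw [htt]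
    have h5 : (M + 1) * (2 * (j:ℝ) * s * (1 - s) ^ (2*j)) ≤ (M + 1) * 1 :=
      mul_le_mul_of_nonneg_left hkey (by linarith)
    nlinarith [h5]
  have hsq : ‖x - x * Z j‖ ^ 2 ≤ ε ^ 2 := by
    rw [hnorm2]; exact hbound.trans hkb'
  exact (pow_le_pow_iff_left₀ (norm_nonneg _) hε.le two_ne_zero).mp hsq


variable {E : Type*} [NormedAddCommGroup E] [Module ℂ E] [SMul Aᵐᵒᵖ E] [RightCStarModule A E]

lemma aux_ext {s t : E} (h : ∀ w : E, (inner A w s : A) = inner A w t) : s = t := by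
  have h0 : (inner A (s - t) (s - t) : A) = 0 := by
    rw [RightCStarModule.inner_sub_right, h (s - t), sub_self]
  exact sub_eq_zero.mp (RightCStarModule.inner_self.mp h0)

lemma aux_op_smul_add (m m' : E) (a : A) : (m + m') <• a = m <• a + m' <• a := by
  refine aux_ext (A := A) fun w => ?_; simp [add_mul]

lemma aux_op_smul_sub (m m' : E) (a : A) : (m - m') <• a = m <• a - m' <• a := by
  refine aux_ext (A := A) fun w => ?_; simp [sub_mul]

lemma aux_zero_op_smul (a : A) : (0 : E) <• a = 0 := by
  refine aux_ext (A := A) fun w => ?_; simp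

lemma aux_op_smul_sub_right (m : E) (a b : A) : m <• (a - b) = m <• a - m <• b := by
  refine aux_ext (A := A) fun w => ?_
  rw [RightCStarModule.inner_op_smul_right, RightCStarModule.inner_sub_right,
    RightCStarModule.inner_op_smul_right, RightCStarModule.inner_op_smul_right, mul_sub]

lemma aux_op_smul_mul (m : E) (a b : A) : m <• (a * b) = (m <• a) <• b := by
  refine aux_ext (A := A) fun w => ?_
  rw [RightCStarModule.inner_op_smul_right, RightCStarModule.inner_op_smul_right,
    RightCStarModule.inner_op_smul_right, mul_assoc]

lemma aux_op_smul_norm (m : E) (a : A) : ‖m <• a‖ ≤ ‖m‖ * ‖a‖ := by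
  have h2 : ‖m <• a‖ ^ 2 ≤ (‖m‖ * ‖a‖) ^ 2 := by
    rw [RightCStarModule.norm_sq_eq (A := A)]
    calc ‖(inner A (m <• a) (m <• a) : A)‖ = ‖star a * ((inner A m m : A) * a)‖ := by
          rw [RightCStarModule.inner_op_smul_right, RightCStarModule.inner_op_smul_left, mul_assoc]
    _ ≤ ‖star a‖ * ‖(inner A m m : A) * a‖ := norm_mul_le _ _
    _ ≤ ‖star a‖ * (‖(inner A m m : A)‖ * ‖a‖) := by
          exact mul_le_mul_of_nonneg_left (norm_mul_le _ _) (norm_nonneg _)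
    _ = ‖a‖ * (‖(inner A m m : A)‖ * ‖a‖) := by rw [norm_star]
    _ = ‖(inner A m m : A)‖ * (‖a‖ * ‖a‖) := by ring
    _ = ‖m‖ ^ 2 * (‖a‖ * ‖a‖) := by rw [RightCStarModule.norm_sq_eq (A := A)]
    _ = (‖m‖ * ‖a‖) ^ 2 := by ring
  exact (pow_le_pow_iff_left₀ (norm_nonneg _) (by positivity) two_ne_zero).mp h2


variable (J : TwoSidedIdeal A)

lemma ideal_isClosed : IsClosed (idealSubmodule J E) := by
  unfold idealSubmodule; exact isClosed_closure

lemma ideal_gen_mem (m : E) {x : A} (hx : x ∈ J) : m <• x ∈ idealSubmodule J E :=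
  subset_closure (AddSubmonoid.subset_closure ⟨m, x, hx, rfl⟩)

lemma ideal_zero_mem : (0 : E) ∈ idealSubmodule J E :=
  subset_closure (AddSubmonoid.closure _).zero_mem

lemma ideal_add_mem {p q : E} (hp : p ∈ idealSubmodule J E) (hq : q ∈ idealSubmodule J E) :
    p + q ∈ idealSubmodule J E := by
  have h := (AddSubmonoid.closure
      {y : E | ∃ m : E, ∃ x ∈ J, y = m <• x}).topologicalClosure.add_mem
    (show p ∈ (AddSubmonoid.closure _).topologicalClosure from hp)
    (show q ∈ (AddSubmonoid.closure _).topologicalClosure from hq)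
  exact h

lemma ideal_op_smul {s : E} (hs : s ∈ idealSubmodule J E) (a : A) :
    s <• a ∈ idealSubmodule J E := by
  classical
  have hcont : Continuous (fun m : E => m <• a) := by
    refine (LipschitzWith.of_dist_le_mul (K := ‖a‖₊) fun p q => ?_).continuous
    rw [dist_eq_norm, dist_eq_norm, ← aux_op_smul_sub]
    calc ‖(p - q) <• a‖ ≤ ‖p - q‖ * ‖a‖ := aux_op_smul_norm _ _
    _ = ‖a‖₊ * ‖p - q‖ := by rw [coe_nnnorm, mul_comm]
  have himg : (fun m : E => m <• a) '' (AddSubmonoid.closure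
      {y : E | ∃ m : E, ∃ x ∈ J, y = m <• x} : Set E) ⊆
      (AddSubmonoid.closure {y : E | ∃ m : E, ∃ x ∈ J, y = m <• x} : Set E) := by
    rintro _ ⟨p, hp, rfl⟩
    induction hp using AddSubmonoid.closure_induction with
    | mem y hy =>
      obtain ⟨m, x, hxJ, rfl⟩ := hy
      show m <• x <• a ∈ _
      rw [← aux_op_smul_mul]
      exact AddSubmonoid.subset_closure ⟨m, x * a, J.mul_mem_right x a hxJ, rfl⟩
    | zero =>
      show (0:E) <• a ∈ _
      rw [aux_zero_op_smul]; exact (AddSubmonoid.closure _).zero_mem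
    | add p q hp hq ihp ihq =>
      show (p + q) <• a ∈ _
      rw [aux_op_smul_add]; exact (AddSubmonoid.closure _).add_mem ihp ihq
  have : s <• a ∈ closure ((fun m : E => m <• a) ''
      (AddSubmonoid.closure {y : E | ∃ m : E, ∃ x ∈ J, y = m <• x} : Set E)) :=
    image_closure_subset_closure_image hcont ⟨s, hs, rfl⟩
  exact closure_mono himg this

end Aux

/-- If `J ⊆ A` is an essential closed two-sided ideal and `T : M → N` is a `J`-adjointable
`A`-operator between Hilbert C*-modules over `A`, then the restriction `T|_{M_J} : M_J → N_J`
is adjointable: there is an `A`-operator `S : N_J → M_J` with `⟪S n, m⟫ = ⟪n, T m⟫` for all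
`m ∈ M_J`, `n ∈ N_J`. -/
theorem restriction_adjointable
    {A : Type*} [NonUnitalCStarAlgebra A] [PartialOrder A] [StarOrderedRing A]
    {E : Type*} [NormedAddCommGroup E] [Module ℂ E] [SMul Aᵐᵒᵖ E] [RightCStarModule A E]
    [CompleteSpace E]
    {F : Type*} [NormedAddCommGroup F] [Module ℂ F] [SMul Aᵐᵒᵖ F] [RightCStarModule A F]
    [CompleteSpace F]
    (J : TwoSidedIdeal A) (hJclosed : IsClosed (J : Set A))
    (hJess : ∀ a : A, (∀ x ∈ J, a * x = 0) → a = 0)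
    (T : E →L[ℂ] F) (hT_mod : ∀ (m : E) (a : A), T (m <• a) = T m <• a)
    (hT_Jadj : ∀ (n : F), ∀ x ∈ J, ∃ m₀ : E, ∀ m : E,
      (inner A (T m) n : A) * x = inner A m m₀) :
    ∃ S : F → E,
      (∀ n ∈ idealSubmodule J F, S n ∈ idealSubmodule J E) ∧
      (∀ n₁ ∈ idealSubmodule J F, ∀ n₂ ∈ idealSubmodule J F, S (n₁ + n₂) = S n₁ + S n₂) ∧
      (∀ n ∈ idealSubmodule J F, ∀ a : A, S (n <• a) = S n <• a) ∧
      (∃ C : ℝ, ∀ n ∈ idealSubmodule J F, ‖S n‖ ≤ C * ‖n‖) ∧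
      (∀ n ∈ idealSubmodule J F, ∀ m ∈ idealSubmodule J E,
        (inner A (S n) m : A) = inner A n (T m)) := by
  classical
  letI : NormedSpace ℂ E := .ofCore (RightCStarModule.normedSpaceCore (A := A))
  letI : NormedSpace ℂ F := .ofCore (RightCStarModule.normedSpaceCore (A := A))
  -- the "good" set: elements of `F` admitting an exact adjoint vector in `M_J`
  set P : F → E → Prop := fun n s => s ∈ idealSubmodule J E ∧
    ∀ m : E, (inner A s m : A) = inner A n (T m) with hP
  -- uniqueness of the adjoint vector
  have huniq : ∀ (n : F) (s s' : E), (∀ m : E, (inner A s m : A) = inner A n (T m)) →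
      (∀ m : E, (inner A s' m : A) = inner A n (T m)) → s = s' := by
    intro n s s' h h'
    refine aux_ext (A := A) fun w => ?_
    rw [← RightCStarModule.star_inner s, ← RightCStarModule.star_inner s', h w, h' w]
  -- norm bound for adjoint vectors
  have hbnd : ∀ (n : F) (s : E), (∀ m : E, (inner A s m : A) = inner A n (T m)) →
      ‖s‖ ≤ ‖T‖ * ‖n‖ := by
    intro n s h
    have h2 : ‖s‖ ^ 2 ≤ (‖T‖ * ‖n‖) * ‖s‖ := by
      calc ‖s‖ ^ 2 = ‖(inner A s s : A)‖ := RightCStarModule.norm_sq_eq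
      _ = ‖(inner A n (T s) : A)‖ := by rw [h s]
      _ ≤ ‖n‖ * ‖T s‖ := RightCStarModule.norm_inner_le F
      _ ≤ ‖n‖ * (‖T‖ * ‖s‖) := by
            refine mul_le_mul_of_nonneg_left (T.le_opNorm s) (norm_nonneg n)
      _ = (‖T‖ * ‖n‖) * ‖s‖ := by ring
    rcases eq_or_lt_of_le (norm_nonneg s) with h0 | h0
    · rw [← h0]; positivity
    · nlinarith
  -- the good set absorbs limits
  have hGc : ∀ n : F, (∀ ε > (0:ℝ), ∃ n' : F, (∃ s, P n' s) ∧ ‖n - n'‖ < ε) →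
      ∃ s, P n s := by
    intro n hn
    have hseq : ∀ k : ℕ, ∃ n' : F, (∃ s, P n' s) ∧ ‖n - n'‖ < 1 / (k + 1) := by
      intro k; exact hn _ (by positivity)
    choose u hu hud using hseq
    choose s hsmem hsprop using fun k => hu k
    have hulim : Filter.Tendsto u Filter.atTop (nhds n) := by
      rw [tendsto_iff_norm_sub_tendsto_zero]
      have hlim0 : Filter.Tendsto (fun k : ℕ => 1/((k:ℝ)+1)) Filter.atTop (nhds 0) :=
        tendsto_one_div_add_atTop_nhds_zero_nat
      refine squeeze_zero (fun k => norm_nonneg _) (fun k => ?_) hlim0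
      rw [norm_sub_rev]; exact (hud k).le
    have hdiff : ∀ k l : ℕ, ‖s k - s l‖ ≤ ‖T‖ * ‖u k - u l‖ := by
      intro k l
      refine hbnd (u k - u l) (s k - s l) fun m => ?_
      rw [RightCStarModule.inner_sub_left, RightCStarModule.inner_sub_left,
        hsprop k m, hsprop l m]
    have hucau : CauchySeq u := hulim.cauchySeq
    have hscau : CauchySeq s := by
      rw [Metric.cauchySeq_iff] at hucau ⊢
      intro ε hε
      obtain ⟨N, hN⟩ := hucau (ε / (‖T‖ + 1)) (by positivity)
      refine ⟨N, fun k hk l hl => ?_⟩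
      have := hN k hk l hl
      rw [dist_eq_norm] at this ⊢
      calc ‖s k - s l‖ ≤ ‖T‖ * ‖u k - u l‖ := hdiff k l
      _ ≤ ‖T‖ * (ε / (‖T‖ + 1)) := by
            refine mul_le_mul_of_nonneg_left this.le (norm_nonneg T)
      _ < ε := by
            rw [mul_div_assoc']
            rw [div_lt_iff₀ (by positivity)]
            nlinarith [norm_nonneg T]
    obtain ⟨sl, hsl⟩ := cauchySeq_tendsto_of_complete hscau
    refine ⟨sl, (ideal_isClosed J).mem_of_tendsto hsl
      (Filter.Eventually.of_forall fun k => hsmem k), fun m => ?_⟩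
    have h1 : Filter.Tendsto (fun k => (inner A (s k) m : A)) Filter.atTop
        (nhds (inner A sl m : A)) := by
      rw [tendsto_iff_norm_sub_tendsto_zero]
      have hz : Filter.Tendsto (fun k => ‖s k - sl‖ * ‖m‖) Filter.atTop (nhds 0) := by
        simpa using ((tendsto_iff_norm_sub_tendsto_zero.mp hsl).mul_const ‖m‖)
      refine squeeze_zero (fun k => norm_nonneg _) (fun k => ?_) hz
      rw [← RightCStarModule.inner_sub_left]
      exact RightCStarModule.norm_inner_le E
    have h2 : Filter.Tendsto (fun k => (inner A (u k) (T m) : A)) Filter.atTop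
        (nhds (inner A n (T m) : A)) := by
      rw [tendsto_iff_norm_sub_tendsto_zero]
      have hz : Filter.Tendsto (fun k => ‖u k - n‖ * ‖T m‖) Filter.atTop (nhds 0) := by
        simpa using ((tendsto_iff_norm_sub_tendsto_zero.mp hulim).mul_const ‖T m‖)
      refine squeeze_zero (fun k => norm_nonneg _) (fun k => ?_) hz
      rw [← RightCStarModule.inner_sub_left]
      exact RightCStarModule.norm_inner_le F
    have heq : (fun k => (inner A (s k) m : A)) = fun k => (inner A (u k) (T m) : A) := by
      funext k; exact hsprop k m
    rw [heq] at h1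
    exact tendsto_nhds_unique h1 h2
  -- generators with factored coefficient are good
  have hgen2 : ∀ (n' : F) (y : A), y ∈ J → ∀ (z : A), z ∈ J → ∃ s, P (n' <• (y * z)) s := by
    intro n' y hy z hz
    obtain ⟨m₀, hm₀⟩ := hT_Jadj n' y hy
    refine ⟨m₀ <• z, ideal_gen_mem J m₀ hz, fun m => ?_⟩
    calc (inner A (m₀ <• z) m : A) = star z * (inner A m₀ m : A) :=
          RightCStarModule.inner_op_smul_left
    _ = star z * star (inner A m m₀ : A) := by rw [RightCStarModule.star_inner]
    _ = star z * star ((inner A (T m) n' : A) * y) := by rw [hm₀ m]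
    _ = star z * (star y * star (inner A (T m) n' : A)) := by rw [star_mul]
    _ = star z * (star y * (inner A n' (T m) : A)) := by rw [RightCStarModule.star_inner]
    _ = star (y * z) * (inner A n' (T m) : A) := by rw [star_mul, mul_assoc]
    _ = inner A (n' <• (y * z)) (T m) := (RightCStarModule.inner_op_smul_left).symm
  -- all generators are good
  have hgen : ∀ (n' : F) (x : A), x ∈ J → ∃ s, P (n' <• x) s := by
    intro n' x hx
    refine hGc _ fun ε hε => ?_
    obtain ⟨z, hz, hznorm⟩ := aux_factor J hJclosed hx
      (show (0:ℝ) < ε/(2*(‖n'‖+1)) by positivity)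
    refine ⟨n' <• (x * z), hgen2 n' x hx z hz, ?_⟩
    have hq : ‖n'‖ / (2*(‖n'‖+1)) < 1 :=
      (div_lt_one (by positivity)).mpr (by linarith [norm_nonneg n'])
    calc ‖n' <• x - n' <• (x * z)‖ = ‖n' <• (x - x * z)‖ := by rw [aux_op_smul_sub_right]
    _ ≤ ‖n'‖ * ‖x - x * z‖ := aux_op_smul_norm _ _
    _ ≤ ‖n'‖ * (ε/(2*(‖n'‖+1))) := mul_le_mul_of_nonneg_left hznorm (norm_nonneg _)
    _ = ε * (‖n'‖/(2*(‖n'‖+1))) := by ring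
    _ < ε * 1 := mul_lt_mul_of_pos_left hq hε
    _ = ε := mul_one ε
  -- every element of `N_J` is good
  have hsub : ∀ n ∈ idealSubmodule J F, ∃ s, P n s := by
    intro n hn
    refine hGc n fun ε hε => ?_
    have hmono : (AddSubmonoid.closure {y : F | ∃ m : F, ∃ x ∈ J, y = m <• x} : Set F) ⊆
        {n : F | ∃ s, P n s} := by
      intro p hp
      induction hp using AddSubmonoid.closure_induction with
      | mem y hy =>
        obtain ⟨n', x, hx, rfl⟩ := hy
        exact hgen n' x hx
      | zero => exact ⟨0, ideal_zero_mem J, fun m => by simp⟩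
      | add p q hp hq ihp ihq =>
        obtain ⟨sp, hsp1, hsp2⟩ := ihp
        obtain ⟨sq, hsq1, hsq2⟩ := ihq
        exact ⟨sp + sq, ideal_add_mem J hsp1 hsq1, fun m => by
          rw [RightCStarModule.inner_add_left, RightCStarModule.inner_add_left, hsp2 m, hsq2 m]⟩
    obtain ⟨p, hp, hdist⟩ := Metric.mem_closure_iff.mp (show n ∈ closure _ from hn) ε hε
    exact ⟨p, hmono hp, by rw [← dist_eq_norm]; exact hdist⟩
  -- define the adjoint
  set S : F → E := fun n => if h : ∃ s, P n s then h.choose else 0 with hSdef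
  have hSspec : ∀ (n : F) (h : ∃ s, P n s), P n (S n) := by
    intro n h
    simp only [hSdef, dif_pos h]
    exact h.choose_spec
  refine ⟨S, ?_, ?_, ?_, ⟨‖T‖, ?_⟩, ?_⟩
  · intro n hn
    exact (hSspec n (hsub n hn)).1
  · intro n₁ h1 n₂ h2
    have h12 := hsub _ (ideal_add_mem J h1 h2)
    have hw : P (n₁ + n₂) (S n₁ + S n₂) := by
      refine ⟨ideal_add_mem J (hSspec _ (hsub _ h1)).1 (hSspec _ (hsub _ h2)).1, fun m => ?_⟩
      rw [RightCStarModule.inner_add_left, (hSspec _ (hsub _ h1)).2 m, (hSspec _ (hsub _ h2)).2 m,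
        ← RightCStarModule.inner_add_left]
    exact huniq _ _ _ (hSspec _ h12).2 hw.2
  · intro n hn a
    have hna := hsub _ (ideal_op_smul J hn a)
    have hw : P (n <• a) (S n <• a) := by
      refine ⟨ideal_op_smul J (hSspec _ (hsub _ hn)).1 a, fun m => ?_⟩
      calc (inner A (S n <• a) m : A) = star a * (inner A (S n) m : A) :=
            RightCStarModule.inner_op_smul_left
      _ = star a * (inner A n (T m) : A) := by rw [(hSspec _ (hsub _ hn)).2 m]
      _ = inner A (n <• a) (T m) := (RightCStarModule.inner_op_smul_left).symm
    exact huniq _ _ _ (hSspec _ hna).2 hw.2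
  · intro n hn
    exact hbnd n (S n) (hSspec _ (hsub _ hn)).2
  · intro n hn m hm
    exact (hSspec _ (hsub _ hn)).2 m
end

section
/- Let A be a C*-algebra, J ⊆ A an essential ideal, and M a Hilbert C*-module over A. If T, S : M → M are J-adjointable A-operators, then the composition T∘S is a J-adjointable A-operator. -/
open scoped RightActions

/-- The Hilbert C⋆-module class as it stood in Mathlib of December 2024 (right `Aᵐᵒᵖ`-action,
inner product `A`-linear on the right in the second variable). -/
class CStarModuleRight (A E : Type*) [NonUnitalSemiring A] [StarRing A]
    [Module ℂ A] [AddCommGroup E] [Module ℂ E] [PartialOrder A] [SMul Aᵐᵒᵖ E] [Norm A] [Norm E]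
    extends Inner A E where
  inner_add_right {x} {y} {z} : inner x (y + z) = inner x y + inner x z
  inner_self_nonneg {x} : 0 ≤ inner x x
  inner_self {x} : inner x x = 0 ↔ x = 0
  inner_op_smul_right {a : A} {x y : E} : inner x (y <• a) = inner x y * a
  inner_smul_right_complex {z : ℂ} {x} {y} : inner x (z • y) = z • inner x y
  star_inner x y : star (inner x y) = inner y x
  norm_eq_sqrt_norm_inner_self x : ‖x‖ = √‖inner x x‖

namespace CStarModuleRight

variable {A : Type*} [NonUnitalCStarAlgebra A] [PartialOrder A] [StarOrderedRing A]
  {E : Type*} [NormedAddCommGroup E] [Module ℂ E] [SMul Aᵐᵒᵖ E] [CStarModuleRight A E]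

lemma R_inner_sub_right {x y z : E} : inner A x (y - z) = inner A x y - inner A x z := by
  have h := inner_add_right (A := A) (x := x) (y := y - z) (z := z)
  rw [sub_add_cancel] at h
  rw [h]; abel

lemma R_inner_zero_right {x : E} : inner A x (0 : E) = 0 := by
  have h := R_inner_sub_right (A := A) (x := x) (y := (0 : E)) (z := 0)
  rw [sub_self, sub_self] at h
  exact h

lemma R_inner_sub_left {x y z : E} : inner A (x - y) z = inner A x z - inner A y z := by
  rw [← star_inner, R_inner_sub_right, star_sub, star_inner, star_inner]

lemma R_inner_op_smul_left {a : A} {x y : E} : inner A (x <• a) y = star a * inner A x y := by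
  rw [← star_inner, inner_op_smul_right, star_mul, star_inner]

lemma R_inner_smul_left_complex {z : ℂ} {x y : E} :
    inner A (z • x) y = star z • inner A x y := by
  rw [← star_inner, inner_smul_right_complex, star_smul, star_inner]

lemma R_inner_smul_right_real {r : ℝ} {x y : E} : inner A x (r • y) = r • inner A x y := by
  have h₁ : r • y = (r : ℂ) • y := by simp
  rw [h₁, inner_smul_right_complex]
  simp

lemma R_inner_smul_left_real {r : ℝ} {x y : E} : inner A (r • x) y = r • inner A x y := by
  have h₁ : r • x = (r : ℂ) • x := by simp
  rw [h₁, R_inner_smul_left_complex]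
  simp

lemma R_norm_sq_eq (A : Type*) [NonUnitalCStarAlgebra A] [PartialOrder A] [StarOrderedRing A]
    {E : Type*} [NormedAddCommGroup E] [Module ℂ E] [SMul Aᵐᵒᵖ E] [CStarModuleRight A E]
    {x : E} : ‖x‖ ^ 2 = ‖inner A x x‖ := by
  rw [norm_eq_sqrt_norm_inner_self (A := A), Real.sq_sqrt (norm_nonneg _)]

lemma R_inner_mul_inner_swap_le {x y : E} :
    inner A y x * inner A x y ≤ ‖x‖ ^ 2 • inner A y y := by
  rcases eq_or_ne x 0 with h | h
  · subst h
    have h0 : ‖(0 : E)‖ = 0 := by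
      rw [norm_eq_sqrt_norm_inner_self (A := A), R_inner_zero_right]; simp
    rw [R_inner_zero_right, h0]; simp
  · have hpos : 0 < ‖x‖ := by
      rw [norm_eq_sqrt_norm_inner_self (A := A), Real.sqrt_pos, norm_pos_iff]
      intro H; exact h (inner_self.mp H)
    have h₁ : ∀ (a : A),
        (0 : A) ≤ ‖x‖ ^ 2 • (star a * a) - ‖x‖ ^ 2 • (star a * inner A x y)
                  - ‖x‖ ^ 2 • (inner A y x * a) + ‖x‖ ^ 2 • (‖x‖ ^ 2 • inner A y y) := fun a => by
      calc (0 : A) ≤ inner A (x <• a - ‖x‖ ^ 2 • y) (x <• a - ‖x‖ ^ 2 • y) := by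
                      exact inner_self_nonneg
            _ = star a * inner A x x * a - ‖x‖ ^ 2 • (star a * inner A x y)
                  - ‖x‖ ^ 2 • (inner A y x * a) + ‖x‖ ^ 2 • (‖x‖ ^ 2 • inner A y y) := by
                      simp only [R_inner_sub_right, R_inner_sub_left, inner_op_smul_right,
                        R_inner_op_smul_left, R_inner_smul_left_real, R_inner_smul_right_real,
                        mul_smul_comm, smul_mul_assoc, sub_mul, mul_sub, mul_assoc, smul_sub]
                      abel
            _ ≤ ‖x‖ ^ 2 • (star a * a) - ‖x‖ ^ 2 • (star a * inner A x y)
                  - ‖x‖ ^ 2 • (inner A y x * a) + ‖x‖ ^ 2 • (‖x‖ ^ 2 • inner A y y) := by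
                      gcongr
                      calc _ ≤ ‖inner A x x‖ • (star a * a) :=
                          CStarAlgebra.star_left_conjugate_le_norm_smul (hb := star_inner x x)
                        _ = ‖x‖ ^ 2 • (star a * a) := by rw [R_norm_sq_eq A]
    specialize h₁ (inner A x y)
    simp only [star_inner, sub_self, zero_sub, le_neg_add_iff_add_le, add_zero] at h₁
    rwa [smul_le_smul_iff_of_pos_left (pow_pos hpos _)] at h₁

lemma R_norm_inner_le {x y : E} : ‖inner A x y‖ ≤ ‖x‖ * ‖y‖ := by
  have := calc ‖inner A x y‖ ^ 2 = ‖inner A x y * inner A y x‖ := by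
                rw [← star_inner y x, CStarRing.norm_star_mul_self, norm_star, pow_two]
    _ ≤ ‖‖y‖ ^ 2 • inner A x x‖ := by
                refine CStarAlgebra.norm_le_norm_of_nonneg_of_le ?_
                  (R_inner_mul_inner_swap_le (x := y) (y := x))
                rw [← star_inner y x]
                exact star_mul_self_nonneg _
    _ = ‖y‖ ^ 2 * ‖inner A x x‖ := by simp [norm_smul]
    _ = (‖x‖ * ‖y‖) ^ 2 := by rw [← R_norm_sq_eq A]; ring
  exact (pow_le_pow_iff_left₀ (norm_nonneg _) (by positivity) (by simp)).mp this

end CStarModuleRight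

lemma approx_aux {A : Type*} [NonUnitalCStarAlgebra A] [PartialOrder A] [StarOrderedRing A]
    (x : A) {ε : ℝ} (hε : 0 < ε) :
    ∃ c : A, ‖x - x * (star x * x) * c‖ ≤ ε := by
  set a : A := star x * x with ha_def
  have ha : IsSelfAdjoint a := IsSelfAdjoint.star_mul_self x
  have ha0 : (0 : A) ≤ a := star_mul_self_nonneg x
  set δ : ℝ := ε ^ 2 with hδ_def
  have hδ : 0 < δ := by positivity
  set k : ℝ → ℝ := fun t => t / (|t| + δ) ^ 2 with hk_def
  have hkc : Continuous k := by
    apply continuous_id.div ((continuous_abs.add continuous_const).pow 2)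
    intro t; exact pow_ne_zero _ (by show |t| + ε ^ 2 ≠ 0; positivity)
  have hk0 : k 0 = 0 := by simp [hk_def]
  set g : ℝ → ℝ := fun t => t * k t with hg_def
  have hgc : Continuous g := continuous_id.mul hkc
  have hg0 : g 0 = 0 := by simp [hg_def, hk0]
  set c : A := cfcₙ k a with hc_def
  set s : A := cfcₙ g a with hs_def
  have hs_eq : a * c = s := by
    conv_lhs => rw [← cfcₙ_id' ℝ a ha]
    exact (cfcₙ_mul _ k a (continuous_id.continuousOn) rfl hkc.continuousOn hk0).symm
  have hss : star s = s := (cfcₙ_predicate g a : IsSelfAdjoint s)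
  refine ⟨c, ?_⟩
  have C1 : Continuous fun t : ℝ => t * g t := continuous_id.mul hgc
  have C2 : Continuous fun t : ℝ => g t * t := hgc.mul continuous_id
  have C3 : Continuous fun t : ℝ => g t * (t * g t) := hgc.mul C1
  have C4 : Continuous fun t : ℝ => t - t * g t := continuous_id.sub C1
  have C5 : Continuous fun t : ℝ => t - t * g t - g t * t := C4.sub C2
  have key : star (x - x * a * c) * (x - x * a * c)
      = cfcₙ (fun t => t - t * g t - g t * t + g t * (t * g t)) a := by
    have h1 : x - x * a * c = x - x * s := by rw [mul_assoc, hs_eq]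
    have expand : star (x - x * s) * (x - x * s)
        = a - a * s - s * a + s * (a * s) := by
      simp only [star_sub, star_mul, hss, ha_def]
      noncomm_ring
    have e1 : a * s = cfcₙ (fun t => t * g t) a := by
      conv_lhs => rw [← cfcₙ_id' ℝ a ha]
      exact (cfcₙ_mul _ g a continuous_id.continuousOn rfl hgc.continuousOn hg0).symm
    have e2 : s * a = cfcₙ (fun t => g t * t) a := by
      conv_lhs => rw [← cfcₙ_id' ℝ a ha]
      exact (cfcₙ_mul g _ a hgc.continuousOn hg0 continuous_id.continuousOn rfl).symm
    have e3 : s * (a * s) = cfcₙ (fun t => g t * (t * g t)) a := by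
      rw [e1]
      exact (cfcₙ_mul g _ a hgc.continuousOn hg0 C1.continuousOn (by simp [hg0])).symm
    have ecomb : cfcₙ (fun t : ℝ => t - t * g t - g t * t + g t * (t * g t)) a
        = a - cfcₙ (fun t => t * g t) a - cfcₙ (fun t => g t * t) a
          + cfcₙ (fun t => g t * (t * g t)) a := by
      rw [cfcₙ_add (fun t : ℝ => t - t * g t - g t * t) (fun t => g t * (t * g t)) a
            C5.continuousOn (by simp [hg0]) C3.continuousOn (by simp [hg0]),
          cfcₙ_sub (fun t : ℝ => t - t * g t) (fun t => g t * t) a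
            C4.continuousOn (by simp [hg0]) C2.continuousOn (by simp [hg0]),
          cfcₙ_sub (fun t : ℝ => t) (fun t => t * g t) a
            continuous_id.continuousOn rfl C1.continuousOn (by simp [hg0]),
          cfcₙ_id' ℝ a ha]
    rw [h1, expand, e3, e1, e2, ecomb]
  have hnorm : ‖star (x - x * a * c) * (x - x * a * c)‖ ≤ δ := by
    rw [key]
    apply norm_cfcₙ_le
    intro t ht
    have ht0 : (0 : ℝ) ≤ t := quasispectrum_nonneg_of_nonneg a ha0 t ht
    have habs : |t| = t := abs_of_nonneg ht0
    have hp : (0 : ℝ) < t + δ := by linarith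
    have hval : t - t * g t - g t * t + g t * (t * g t)
        = t * (1 - t ^ 2 / (t + δ) ^ 2) ^ 2 := by
      simp only [hg_def, hk_def, habs]
      field_simp
      ring
    rw [hval, Real.norm_eq_abs, abs_of_nonneg (by positivity)]
    have h2 : 1 - t ^ 2 / (t + δ) ^ 2 = δ * (2 * t + δ) / (t + δ) ^ 2 := by
      field_simp
      ring
    rw [h2, div_pow, ← mul_div_assoc, div_le_iff₀ (pow_pos (pow_pos hp 2) 2)]
    nlinarith [mul_nonneg ht0 (pow_pos hδ 1).le, sq_nonneg t, sq_nonneg (t * t),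
      mul_nonneg (mul_nonneg ht0 ht0) hδ.le, pow_pos hδ 5,
      mul_nonneg (mul_nonneg (mul_nonneg ht0 ht0) (mul_nonneg ht0 ht0)) hδ.le,
      mul_nonneg (mul_nonneg ht0 ht0) (mul_nonneg hδ.le (mul_nonneg hδ.le hδ.le)),
      mul_nonneg ht0 (mul_nonneg hδ.le (mul_nonneg hδ.le (mul_nonneg hδ.le hδ.le)))]
  rw [CStarRing.norm_star_mul_self] at hnorm
  nlinarith [norm_nonneg (x - x * a * c), hε]

/-- An `A`-operator `T : M → M` on a Hilbert C*-module over `A` is `J`-adjointable if for every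
`n ∈ M` and `x ∈ J` there exists `m₀ ∈ M` with `⟪T m, n⟫·x = ⟪m, m₀⟫` for all `m ∈ M`. -/
def IsJAdjointable {A : Type*} [NonUnitalCStarAlgebra A] [PartialOrder A] [StarOrderedRing A]
    {E : Type*} [NormedAddCommGroup E] [Module ℂ E] [SMul Aᵐᵒᵖ E] [CStarModuleRight A E]
    (J : TwoSidedIdeal A) (T : E →L[ℂ] E) : Prop :=
  ∀ (n : E), ∀ x ∈ J, ∃ m₀ : E, ∀ m : E, (inner A (T m) n : A) * x = inner A m m₀

/-- If `J ⊆ A` is an essential closed two-sided ideal and `T, S` are `J`-adjointable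
`A`-operators on a Hilbert C*-module `M` over `A`, then `T ∘ S` is a `J`-adjointable
`A`-operator. -/
theorem comp_isJAdjointable
    {A : Type*} [NonUnitalCStarAlgebra A] [PartialOrder A] [StarOrderedRing A]
    {E : Type*} [NormedAddCommGroup E] [Module ℂ E] [SMul Aᵐᵒᵖ E] [CStarModuleRight A E]
    [CompleteSpace E]
    (J : TwoSidedIdeal A) (hJclosed : IsClosed (J : Set A))
    (hJess : ∀ a : A, (∀ x ∈ J, a * x = 0) → a = 0)
    (T : E →L[ℂ] E) (hT_mod : ∀ (m : E) (a : A), T (m <• a) = T m <• a)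
    (S : E →L[ℂ] E) (hS_mod : ∀ (m : E) (a : A), S (m <• a) = S m <• a)
    (hT : IsJAdjointable J T) (hS : IsJAdjointable J S) :
    (∀ (m : E) (a : A), (T.comp S) (m <• a) = (T.comp S) m <• a) ∧
      IsJAdjointable J (T.comp S) := by
  refine ⟨fun m a => by simp [ContinuousLinearMap.comp_apply, hS_mod, hT_mod], ?_⟩
  intro n x hx
  letI : NormedSpace ℂ E :=
    { norm_smul_le := fun z y => le_of_eq (by
        rw [CStarModuleRight.norm_eq_sqrt_norm_inner_self (A := A),
          CStarModuleRight.norm_eq_sqrt_norm_inner_self (A := A) y,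
          CStarModuleRight.R_inner_smul_left_complex, CStarModuleRight.inner_smul_right_complex,
          norm_smul, norm_smul, norm_star, ← mul_assoc, Real.sqrt_mul (by positivity),
          Real.sqrt_mul_self (norm_nonneg _)]) }
  -- Step 1: elements of the form `x * (x* x) * c` admit an "adjoint vector".
  have key : ∀ c : A, ∃ m₀ : E, ∀ m : E,
      (inner A ((T.comp S) m) n : A) * (x * (star x * x) * c) = inner A m m₀ := by
    intro c
    obtain ⟨p, hp⟩ := hT n x hx
    obtain ⟨q, hq⟩ := hS p (star x * x) (J.mul_mem_left _ _ hx)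
    refine ⟨q <• c, fun m => ?_⟩
    rw [CStarModuleRight.inner_op_smul_right, ← hq m, ← hp (S m)]
    simp only [ContinuousLinearMap.comp_apply, ← mul_assoc]
  -- Step 2: approximants
  have happrox : ∀ j : ℕ, ∃ c : A, ‖x - x * (star x * x) * c‖ ≤ (1/2 : ℝ) ^ j :=
    fun j => approx_aux x (by positivity)
  choose c hc using happrox
  set f : ℕ → A := fun j => x * (star x * x) * (c j) with hf_def
  choose w hw using fun j => key (c j)
  -- Step 3: the `w j` form a Cauchy sequence
  set K : ℝ := ‖T.comp S‖ * ‖n‖ with hK_def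
  have hK0 : 0 ≤ K := mul_nonneg (norm_nonneg _) (norm_nonneg _)
  have est : ∀ j l : ℕ, ‖w j - w l‖ ≤ K * ‖f j - f l‖ := by
    intro j l
    set d : E := w j - w l with hd_def
    have hdd : (inner A d d : A) = inner A ((T.comp S) d) n * (f j - f l) := by
      rw [mul_sub, hw j d, hw l d, CStarModuleRight.R_inner_sub_right]
    have h1 : ‖d‖ ^ 2 ≤ K * ‖f j - f l‖ * ‖d‖ := by
      rw [CStarModuleRight.R_norm_sq_eq A, hdd]
      calc ‖(inner A ((T.comp S) d) n : A) * (f j - f l)‖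
          ≤ ‖(inner A ((T.comp S) d) n : A)‖ * ‖f j - f l‖ := norm_mul_le _ _
        _ ≤ ‖(T.comp S) d‖ * ‖n‖ * ‖f j - f l‖ := by
            gcongr; exact CStarModuleRight.R_norm_inner_le
        _ ≤ ‖T.comp S‖ * ‖d‖ * ‖n‖ * ‖f j - f l‖ := by
            gcongr; exact (T.comp S).le_opNorm d
        _ = K * ‖f j - f l‖ * ‖d‖ := by ring
    rcases eq_or_lt_of_le (norm_nonneg d) with h | h
    · rw [← h]; positivity
    · have := (mul_le_mul_iff_of_pos_right h).mp (by nlinarith [h1] : ‖d‖ * ‖d‖ ≤ (K * ‖f j - f l‖) * ‖d‖)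
      exact this
  have hcauchy : CauchySeq w := by
    apply cauchySeq_of_le_geometric (1/2 : ℝ) (2 * K) (by norm_num)
    intro j
    rw [dist_eq_norm]
    calc ‖w j - w (j + 1)‖ ≤ K * ‖f j - f (j + 1)‖ := est j (j + 1)
      _ ≤ K * (‖x - f j‖ + ‖x - f (j+1)‖) := by
          gcongr
          calc ‖f j - f (j+1)‖ = ‖(x - f (j+1)) - (x - f j)‖ := by congr 1; abel
            _ ≤ ‖x - f (j+1)‖ + ‖x - f j‖ := norm_sub_le _ _
            _ = ‖x - f j‖ + ‖x - f (j+1)‖ := by ring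
      _ ≤ K * ((1/2:ℝ)^j + (1/2:ℝ)^(j+1)) := by gcongr; exacts [hc j, hc (j+1)]
      _ ≤ 2 * K * (1/2:ℝ)^j := by rw [pow_succ]; nlinarith [pow_pos (by norm_num : (0:ℝ) < 1/2) j]
  obtain ⟨m₀, hm₀⟩ := cauchySeq_tendsto_of_complete hcauchy
  refine ⟨m₀, fun m => ?_⟩
  -- Step 4: take limits
  have hfx : Filter.Tendsto f Filter.atTop (nhds x) := by
    rw [← tendsto_sub_nhds_zero_iff]
    apply squeeze_zero_norm (fun j => ?_) (tendsto_pow_atTop_nhds_zero_of_lt_one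
      (by norm_num) (by norm_num : (1/2:ℝ) < 1))
    rw [norm_sub_rev]; exact hc j
  have h1 : Filter.Tendsto (fun j => (inner A ((T.comp S) m) n : A) * f j) Filter.atTop
      (nhds ((inner A ((T.comp S) m) n : A) * x)) := hfx.const_mul _
  have h2 : Filter.Tendsto (fun j => (inner A m (w j) : A)) Filter.atTop
      (nhds (inner A m m₀)) := by
    have hcont : Continuous (fun y : E => (inner A m y : A)) :=
      AddMonoidHomClass.continuous_of_bound (AddMonoidHom.mk' (fun y : E => (inner A m y : A))
        (fun _ _ => CStarModuleRight.inner_add_right)) ‖m‖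
        (fun y => CStarModuleRight.R_norm_inner_le)
    exact (hcont.tendsto m₀).comp hm₀
  have heq : (fun j => (inner A ((T.comp S) m) n : A) * f j) = fun j => (inner A m (w j) : A) :=
    funext fun j => hw j m
  rw [heq] at h1
  exact tendsto_nhds_unique h1 h2
end

section
/- Let A be a C*-algebra, J ⊆ A an essential ideal, M a Hilbert C*-module over A, and T : M → M a J-adjointable A-operator. Then the restriction T|_{M_J} : M_J → M_J has the same operator norm as T: ‖T|_{M_J}‖ = ‖T‖. (This is the isometricity of the embedding of the algebra of J-adjointable operators on M into the adjointable operators on M_J.) -/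
open scoped RightActions

/-- If `J` is an essential ideal of `A` and `b ≥ 0` satisfies
`‖x* b x‖ ≤ k ‖x‖²` for all `x ∈ J`, then `‖b‖ ≤ k`. -/
lemma essential_norm_le {A : Type*} [NonUnitalCStarAlgebra A] [PartialOrder A]
    [StarOrderedRing A] (J : TwoSidedIdeal A)
    (hJess : ∀ a : A, (∀ x ∈ J, a * x = 0) → a = 0)
    {b : A} (hb : 0 ≤ b) {k : ℝ} (hk : 0 ≤ k)
    (h : ∀ x ∈ J, ‖star x * b * x‖ ≤ k * ‖x‖ ^ 2) : ‖b‖ ≤ k := by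
  by_contra hlt
  push_neg at hlt
  set lam : ℝ := (k + ‖b‖) / 2 with hlam_def
  have hklam : k < lam := by rw [hlam_def]; linarith
  have hlamb : lam < ‖b‖ := by rw [hlam_def]; linarith
  have hlam0 : 0 < lam := lt_of_le_of_lt hk hklam
  set g : ℝ → ℝ := fun t => max (t - lam) 0 with hg_def
  have hgcont : Continuous g := (continuous_id.sub continuous_const).max continuous_const
  have hg0 : g 0 = 0 := by simp [hg_def]; linarith
  have hbsa : IsSelfAdjoint b := .of_nonneg hb
  set c : A := cfcₙ g b with hc_def
  have hcsa : IsSelfAdjoint c := cfcₙ_predicate g b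
  have hbnorm_mem : ‖b‖ ∈ quasispectrum ℝ b := by
    rw [Unitization.quasispectrum_eq_spectrum_inr' ℝ ℂ b]
    rw [← Unitization.norm_inr (𝕜 := ℂ) b]
    exact CStarAlgebra.norm_mem_spectrum_of_nonneg (Unitization.inr_nonneg_iff.mpr hb)
  have hcnorm : g ‖b‖ ≤ ‖c‖ := by
    have := norm_apply_le_norm_cfcₙ g b hbnorm_mem hgcont.continuousOn hg0 hbsa
    calc g ‖b‖ ≤ ‖g ‖b‖‖ := le_abs_self _
      _ ≤ ‖c‖ := this
  have hgb_pos : (0:ℝ) < g ‖b‖ := by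
    simp only [hg_def, lt_max_iff]
    left; linarith
  have hc0 : c ≠ 0 := by
    intro h0
    rw [h0, norm_zero] at hcnorm
    linarith
  obtain ⟨x, hxJ, hx0⟩ : ∃ x ∈ J, c * x ≠ 0 := by
    by_contra hall
    push_neg at hall
    exact hc0 (hJess c hall)
  set y : A := c * x with hy_def
  have hyJ : y ∈ J := J.mul_mem_left _ _ hxJ
  -- key functional calculus inequality : lam • (c * c) ≤ c * (b * c)
  have hmul1 : cfcₙ (fun t => g t * g t) b = c * c :=
    cfcₙ_mul g g b hgcont.continuousOn hg0 hgcont.continuousOn hg0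
  have hmul2 : cfcₙ (fun t => g t * (t * g t)) b = c * (b * c) := by
    rw [cfcₙ_mul g (fun t => t * g t) b hgcont.continuousOn hg0
      (continuous_id.mul hgcont).continuousOn (by simp [hg0]),
      cfcₙ_mul (fun t => t) g b continuous_id.continuousOn rfl hgcont.continuousOn hg0,
      cfcₙ_id' ℝ b]
  have hsmul : cfcₙ (fun t => lam • (g t * g t)) b = lam • (c * c) := by
    rw [cfcₙ_smul lam (fun t => g t * g t) b
      ((hgcont.mul hgcont).continuousOn) (by simp [hg0]), hmul1]
  have hkey : lam • (c * c) ≤ c * (b * c) := by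
    rw [← hsmul, ← hmul2]
    refine cfcₙ_mono (fun t _ => ?_) ?_ ?_ ?_ ?_
    · rcases le_or_gt t lam with ht | ht
      · have : g t = 0 := by simp [hg_def]; linarith
        simp [this]
      · have hgt : (0:ℝ) ≤ g t := le_max_right _ _
        have : lam * (g t * g t) ≤ t * (g t * g t) := by nlinarith
        simpa [smul_eq_mul, mul_left_comm, mul_comm] using this
    · exact Continuous.continuousOn (by fun_prop)
    · exact (hgcont.mul ((continuous_id.mul hgcont))).continuousOn
    · simp [hg0]
    · simp [hg0]
  have hconj := star_left_conjugate_le_conjugate hkey x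
  have hL : star x * (lam • (c * c)) * x = lam • (star y * y) := by
    rw [mul_smul_comm, smul_mul_assoc]
    congr 1
    rw [hy_def, star_mul, hcsa.star_eq]
    noncomm_ring
  have hR : star x * (c * (b * c)) * x = star y * b * y := by
    rw [hy_def, star_mul, hcsa.star_eq]
    noncomm_ring
  rw [hL, hR] at hconj
  have hy_pos : (0:ℝ) < ‖y‖ := norm_pos_iff.mpr hx0
  have hnn : 0 ≤ lam • (star y * y) := smul_nonneg hlam0.le (star_mul_self_nonneg y)
  have h1 : lam * ‖y‖ ^ 2 ≤ ‖star y * b * y‖ := by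
    calc lam * ‖y‖ ^ 2 = ‖lam • (star y * y)‖ := by
          rw [norm_smul, Real.norm_of_nonneg hlam0.le, CStarRing.norm_star_mul_self, sq]
      _ ≤ _ := CStarAlgebra.norm_le_norm_of_nonneg_of_le hnn hconj
  have h2 : ‖star y * b * y‖ ≤ k * ‖y‖ ^ 2 := h y hyJ
  have hlk : lam ≤ k := le_of_mul_le_mul_right (h1.trans h2) (pow_pos hy_pos 2)
  linarith

/-- If `J ⊆ A` is an essential closed two-sided ideal and `T` is a `J`-adjointable `A`-operator
on a Hilbert C*-module `M` over `A`, then the operator norm of the restriction of `T` to `M_J`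
(expressed as the infimum of the admissible Lipschitz-type bounds on `M_J`) equals `‖T‖`. -/
theorem norm_restriction_eq
    {A : Type*} [NonUnitalCStarAlgebra A] [PartialOrder A] [StarOrderedRing A]
    {E : Type*} [NormedAddCommGroup E] [NormedSpace ℂ E] [SMul Aᵐᵒᵖ E] [CStarModuleRight A E]
    [CompleteSpace E]
    (J : TwoSidedIdeal A) (hJclosed : IsClosed (J : Set A))
    (hJess : ∀ a : A, (∀ x ∈ J, a * x = 0) → a = 0)
    (T : E →L[ℂ] E) (hT_mod : ∀ (m : E) (a : A), T (m <• a) = T m <• a)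
    (hT_Jadj : ∀ (n : E), ∀ x ∈ J, ∃ m₀ : E, ∀ m : E,
      (inner A (T m) n : A) * x = inner A m m₀) :
    sInf {C : ℝ | 0 ≤ C ∧ ∀ m ∈ idealSubmodule J E, ‖T m‖ ≤ C * ‖m‖} = ‖T‖ := by
  have hnormsq : ∀ v : E, ‖(inner A v v : A)‖ = ‖v‖ ^ 2 := by
    intro v
    rw [CStarModuleRight.norm_eq_sqrt_norm_inner_self (A := A) v, Real.sq_sqrt (norm_nonneg _)]
  have hinner_smul : ∀ (v : E) (x : A),
      (inner A (v <• x) (v <• x) : A) = star x * (inner A v v : A) * x := by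
    intro v x
    have h1 : (inner A (v <• x) v : A) = star x * (inner A v v : A) := by
      rw [← CStarModuleRight.star_inner v (v <• x), CStarModuleRight.inner_op_smul_right,
        star_mul, CStarModuleRight.star_inner v v]
    rw [CStarModuleRight.inner_op_smul_right, h1]
  have hsm : ∀ (v : E) (x : A), ‖v <• x‖ ≤ ‖v‖ * ‖x‖ := by
    intro v x
    have h2 : ‖v <• x‖ ^ 2 ≤ (‖v‖ * ‖x‖) ^ 2 := by
      rw [← hnormsq, hinner_smul]
      calc ‖star x * (inner A v v : A) * x‖
          ≤ ‖star x * (inner A v v : A)‖ * ‖x‖ := norm_mul_le _ _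
        _ ≤ ‖star x‖ * ‖(inner A v v : A)‖ * ‖x‖ := by
            gcongr; exact norm_mul_le _ _
        _ = ‖x‖ * ‖v‖ ^ 2 * ‖x‖ := by rw [norm_star, hnormsq]
        _ = (‖v‖ * ‖x‖) ^ 2 := by ring
    calc ‖v <• x‖ = Real.sqrt (‖v <• x‖ ^ 2) := (Real.sqrt_sq (norm_nonneg _)).symm
      _ ≤ Real.sqrt ((‖v‖ * ‖x‖) ^ 2) := Real.sqrt_le_sqrt h2
      _ = ‖v‖ * ‖x‖ := Real.sqrt_sq (by positivity)
  have hmemT : ‖T‖ ∈ {C : ℝ | 0 ≤ C ∧ ∀ m ∈ idealSubmodule J E, ‖T m‖ ≤ C * ‖m‖} :=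
    ⟨norm_nonneg T, fun m _ => T.le_opNorm m⟩
  apply le_antisymm
  · exact csInf_le ⟨0, fun C hC => hC.1⟩ hmemT
  · refine le_csInf ⟨‖T‖, hmemT⟩ fun C hC => ?_
    obtain ⟨hC0, hCb⟩ := hC
    refine T.opNorm_le_bound hC0 fun m => ?_
    have key : ‖(inner A (T m) (T m) : A)‖ ≤ (C * ‖m‖) ^ 2 := by
      refine essential_norm_le J hJess CStarModuleRight.inner_self_nonneg (by positivity)
        fun x hx => ?_
      have hmem : (m <• x) ∈ idealSubmodule J E :=
        subset_closure (AddSubmonoid.subset_closure ⟨m, x, hx, rfl⟩)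
      calc ‖star x * (inner A (T m) (T m) : A) * x‖
          = ‖(inner A (T m <• x) (T m <• x) : A)‖ := by rw [hinner_smul]
        _ = ‖(inner A (T (m <• x)) (T (m <• x)) : A)‖ := by rw [hT_mod]
        _ = ‖T (m <• x)‖ ^ 2 := hnormsq _
        _ ≤ (C * ‖m <• x‖) ^ 2 := by
            have := hCb (m <• x) hmem
            gcongr
        _ ≤ (C * (‖m‖ * ‖x‖)) ^ 2 := by
            have := hsm m x
            gcongr
        _ = (C * ‖m‖) ^ 2 * ‖x‖ ^ 2 := by ring
    calc ‖T m‖ = Real.sqrt (‖(inner A (T m) (T m) : A)‖) := by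
          rw [hnormsq, Real.sqrt_sq (norm_nonneg _)]
      _ ≤ Real.sqrt ((C * ‖m‖) ^ 2) := Real.sqrt_le_sqrt key
      _ = C * ‖m‖ := Real.sqrt_sq (by positivity)
end

section
/- Let A be a C*-algebra, J ⊆ A an essential ideal, and c ∈ A a selfadjoint element. If x*·c·x ≥ 0 for every x ∈ J, then c ≥ 0. -/
/-- If `J ⊆ A` is an essential closed two-sided ideal of a C*-algebra `A` and `c ∈ A` is a
selfadjoint element such that `x* · c · x ≥ 0` for every `x ∈ J`, then `c ≥ 0`. -/
theorem nonneg_of_conj_nonneg_on_essential_ideal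
    {A : Type*} [NonUnitalCStarAlgebra A] [PartialOrder A] [StarOrderedRing A]
    (J : TwoSidedIdeal A) (hJclosed : IsClosed (J : Set A))
    (hJess : ∀ a : A, (∀ x ∈ J, a * x = 0) → a = 0)
    (c : A) (hc : IsSelfAdjoint c)
    (h : ∀ x ∈ J, 0 ≤ star x * c * x) :
    0 ≤ c := by
  set s := CFC.sqrt (c⁻) with hs
  have hneg : (0 : A) ≤ c⁻ := CFC.negPart_nonneg c
  have hsnn : (0 : A) ≤ s := CFC.sqrt_nonneg _
  have hss : s * s = c⁻ := CFC.sqrt_mul_sqrt_self _ hneg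
  have hssa : star s = s := hsnn.isSelfAdjoint
  -- s * c⁺ = 0
  have hsc : s * c⁺ = 0 := by
    have : star (s * c⁺) * (s * c⁺) = 0 := by
      rw [star_mul, (CFC.posPart_nonneg c).isSelfAdjoint.star_eq, hssa]
      calc c⁺ * s * (s * c⁺) = c⁺ * (s * s) * c⁺ := by noncomm_ring
        _ = c⁺ * c⁻ * c⁺ := by rw [hss]
        _ = 0 := by rw [CFC.posPart_mul_negPart]; simp
    exact (CStarRing.star_mul_self_eq_zero_iff _).mp this
  -- s * c * s = -(c⁻ * c⁻)
  have key : s * c * s = -(c⁻ * c⁻) := by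
    conv_lhs => rw [← CFC.posPart_sub_negPart c hc]
    rw [mul_sub, sub_mul, hsc, zero_mul, zero_sub, ← hss]
    noncomm_ring
  -- for x ∈ J : c⁻ * x = 0
  have hcx : ∀ x ∈ J, c⁻ * x = 0 := by
    intro x hx
    have hsx : s * x ∈ J := J.mul_mem_left _ _ hx
    have h1 : 0 ≤ star (s * x) * c * (s * x) := h _ hsx
    have h2 : star (s * x) * c * (s * x) = -(star (c⁻ * x) * (c⁻ * x)) := by
      rw [star_mul, hssa, star_mul, hneg.isSelfAdjoint.star_eq]
      calc star x * s * c * (s * x) = star x * (s * c * s) * x := by noncomm_ring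
        _ = star x * (-(c⁻ * c⁻)) * x := by rw [key]
        _ = -(star x * c⁻ * (c⁻ * x)) := by noncomm_ring
    have h3 : 0 ≤ star (c⁻ * x) * (c⁻ * x) := star_mul_self_nonneg _
    have h4 : star (c⁻ * x) * (c⁻ * x) = 0 := by
      rw [h2] at h1
      exact le_antisymm (neg_nonneg.mp h1) h3
    exact (CStarRing.star_mul_self_eq_zero_iff _).mp h4
  have hcneg : c⁻ = 0 := hJess _ hcx
  calc (0:A) ≤ c⁺ := CFC.posPart_nonneg c
    _ = c⁺ - c⁻ := by rw [hcneg, sub_zero]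
    _ = c := CFC.posPart_sub_negPart c hc
end

section
/- Let A be a C*-algebra, J ⊆ A an essential ideal, M a Hilbert C*-module over A, T : M → M an A-operator, and K ≥ 0. If x*·⟪T m, T m⟫·x ≤ K·x*·⟪m, m⟫·x for every m ∈ M and every x ∈ J, then ⟪T m, T m⟫ ≤ K·⟪m, m⟫ for every m ∈ M. -/
open scoped RightActions

/-- Let `J ⊆ A` be an essential closed two-sided ideal, `M` a Hilbert C*-module over `A`,
`T` an `A`-operator on `M`, and `K ≥ 0`. If `x* · ⟪T m, T m⟫ · x ≤ K · x* · ⟪m, m⟫ · x` for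
every `m ∈ M` and `x ∈ J`, then `⟪T m, T m⟫ ≤ K · ⟪m, m⟫` for every `m ∈ M`. -/
theorem inner_le_of_conj_le_on_essential_ideal
    {A : Type*} [NonUnitalCStarAlgebra A] [PartialOrder A] [StarOrderedRing A]
    {E : Type*} [NormedAddCommGroup E] [Module ℂ E] [SMul Aᵐᵒᵖ E] [CStarModuleRight A E]
    [CompleteSpace E]
    (J : TwoSidedIdeal A) (hJclosed : IsClosed (J : Set A))
    (hJess : ∀ a : A, (∀ x ∈ J, a * x = 0) → a = 0)
    (T : E →L[ℂ] E) (hT_mod : ∀ (m : E) (a : A), T (m <• a) = T m <• a)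
    (K : ℝ) (hK : 0 ≤ K)
    (h : ∀ (m : E), ∀ x ∈ J,
      star x * (inner A (T m) (T m) : A) * x ≤ K • (star x * (inner A m m : A) * x)) :
    ∀ m : E, (inner A (T m) (T m) : A) ≤ K • (inner A m m : A) := by
  intro m
  set b : A := K • (inner A m m : A) - (inner A (T m) (T m) : A) with hb_def
  have hTm_sa : IsSelfAdjoint (inner A (T m) (T m) : A) :=
    (CStarModuleRight.inner_self_nonneg (x := T m)).isSelfAdjoint
  have hm_sa : IsSelfAdjoint (inner A m m : A) :=
    (CStarModuleRight.inner_self_nonneg (x := m)).isSelfAdjoint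
  have hb_sa : IsSelfAdjoint b := by
    rw [hb_def, IsSelfAdjoint, star_sub, star_smul, star_trivial,
      hm_sa.star_eq, hTm_sa.star_eq]
  rw [← sub_nonneg, ← CFC.negPart_eq_zero_iff b hb_sa]
  have hconj : ∀ x ∈ J, 0 ≤ star x * b * x := by
    intro x hx
    have hle := h m x hx
    rw [← sub_nonneg] at hle
    have heq : K • (star x * (inner A m m : A) * x) -
        star x * (inner A (T m) (T m) : A) * x = star x * b * x := by
      rw [hb_def, mul_sub, sub_mul, mul_smul_comm, smul_mul_assoc]
    rwa [heq] at hle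
  clear_value b
  clear hb_def
  have hc_nonneg : 0 ≤ b⁻ := CFC.negPart_nonneg b
  have hc_sa : IsSelfAdjoint b⁻ := hc_nonneg.isSelfAdjoint
  have hbc : b * b⁻ = -(b⁻ * b⁻) := by
    nth_rw 1 [← CFC.posPart_sub_negPart b hb_sa]
    rw [sub_mul, CFC.posPart_mul_negPart, zero_sub]
  have hcbc : b⁻ * b * b⁻ = -(b⁻ * b⁻ * b⁻) := by
    rw [mul_assoc, hbc, mul_neg, mul_assoc]
  have hccc_nonneg : 0 ≤ b⁻ * b⁻ * b⁻ := conjugate_nonneg_of_nonneg hc_nonneg hc_nonneg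
  have hcube : ∀ x ∈ J, star x * (b⁻ * b⁻ * b⁻) * x = 0 := by
    intro x hx
    have h1 : 0 ≤ star (b⁻ * x) * b * (b⁻ * x) :=
      hconj (b⁻ * x) (J.mul_mem_left _ _ hx)
    have h2 : star (b⁻ * x) * b * (b⁻ * x) = -(star x * (b⁻ * b⁻ * b⁻) * x) := by
      rw [star_mul, hc_sa.star_eq]
      have : star x * b⁻ * b * (b⁻ * x) = star x * (b⁻ * b * b⁻) * x := by
        simp only [mul_assoc]
      rw [this, hcbc]
      simp only [mul_neg, neg_mul]
    rw [h2] at h1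
    have h3 : 0 ≤ star x * (b⁻ * b⁻ * b⁻) * x := star_left_conjugate_nonneg hccc_nonneg x
    exact le_antisymm (neg_nonneg.mp h1) h3
  have hcx : ∀ x ∈ J, (b⁻ * b⁻ * b⁻) * x = 0 := by
    intro x hx
    have hs_nonneg : 0 ≤ CFC.sqrt (b⁻ * b⁻ * b⁻) := CFC.sqrt_nonneg _
    have hs_sq : CFC.sqrt (b⁻ * b⁻ * b⁻) * CFC.sqrt (b⁻ * b⁻ * b⁻) = b⁻ * b⁻ * b⁻ :=
      CFC.sqrt_mul_sqrt_self _ hccc_nonneg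
    have hsx : CFC.sqrt (b⁻ * b⁻ * b⁻) * x = 0 := by
      rw [← CStarRing.star_mul_self_eq_zero_iff, star_mul, hs_nonneg.isSelfAdjoint.star_eq]
      have : star x * CFC.sqrt (b⁻ * b⁻ * b⁻) * (CFC.sqrt (b⁻ * b⁻ * b⁻) * x) =
          star x * (CFC.sqrt (b⁻ * b⁻ * b⁻) * CFC.sqrt (b⁻ * b⁻ * b⁻)) * x := by
        simp only [mul_assoc]
      rw [this, hs_sq]
      exact hcube x hx
    calc (b⁻ * b⁻ * b⁻) * x
        = CFC.sqrt (b⁻ * b⁻ * b⁻) * (CFC.sqrt (b⁻ * b⁻ * b⁻) * x) := by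
          rw [← mul_assoc, hs_sq]
      _ = 0 := by rw [hsx, mul_zero]
  have hccc : b⁻ * b⁻ * b⁻ = 0 := hJess _ hcx
  have hnorm : ‖(b⁻ : A)‖ ^ 4 = 0 := by
    have h1 : ‖b⁻ * b⁻‖ = ‖(b⁻ : A)‖ * ‖(b⁻ : A)‖ := by
      rw [← CStarRing.norm_star_mul_self (x := b⁻), hc_sa.star_eq]
    have h2 : ‖(b⁻ * b⁻) * (b⁻ * b⁻)‖ = ‖b⁻ * b⁻‖ * ‖b⁻ * b⁻‖ := by
      rw [← CStarRing.norm_star_mul_self (x := b⁻ * b⁻), star_mul, hc_sa.star_eq]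
    have h3 : (b⁻ * b⁻) * (b⁻ * b⁻) = 0 := by
      rw [show (b⁻ * b⁻) * (b⁻ * b⁻) = (b⁻ * b⁻ * b⁻) * b⁻ by simp only [mul_assoc],
        hccc, zero_mul]
    rw [h3, norm_zero] at h2
    calc ‖(b⁻ : A)‖ ^ 4 = (‖(b⁻ : A)‖ * ‖(b⁻ : A)‖) * (‖(b⁻ : A)‖ * ‖(b⁻ : A)‖) := by ring
      _ = ‖b⁻ * b⁻‖ * ‖b⁻ * b⁻‖ := by rw [h1]
      _ = 0 := h2.symm
  have : ‖(b⁻ : A)‖ = 0 := pow_eq_zero_iff (n := 4) (by norm_num) |>.mp hnorm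
  exact norm_eq_zero.mp this
end

section
/- Let A be a C*-algebra and M a Hilbert C*-module over A. Let f : M → A be a bounded additive anti-A-linear map (f(m·a) = a*·f(m)) and k ∈ M, and define T : M → M by T(m) = k·(f(m))*. Then T is an A-operator and ⟪T m, n⟫ = f(m)·⟪k, n⟫ for all m, n ∈ M. Moreover, if f has the property that for every a ∈ A, the existence of m₀ ∈ M with f(m)·a = ⟪m, m₀⟫ for all m ∈ M implies a = 0, and if k ≠ 0, then T is not J-adjointable for any essential ideal J ⊆ A. -/
open scoped RightActions

section
variable {A : Type*} [NonUnitalCStarAlgebra A] [PartialOrder A] [StarOrderedRing A]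
  {E : Type*} [NormedAddCommGroup E] [Module ℂ E] [SMul Aᵐᵒᵖ E] [CStarModuleRight A E]

private lemma cm_inner_add_right (x y z : E) : inner A x (y + z) = inner A x y + inner A x z :=
  CStarModuleRight.inner_add_right

private lemma cm_inner_sub_right (x y z : E) : inner A x (y - z) = inner A x y - inner A x z := by
  have h := cm_inner_add_right (A := A) x (y - z) z
  rw [sub_add_cancel] at h
  exact eq_sub_of_add_eq h.symm

private lemma cm_star_inner (x y : E) : star (inner A x y) = inner A y x :=
  CStarModuleRight.star_inner x y

private lemma cm_inner_add_left (x y z : E) : inner A (x + y) z = inner A x z + inner A y z := by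
  rw [← cm_star_inner z (x + y), cm_inner_add_right, star_add, cm_star_inner, cm_star_inner]

private lemma cm_inner_op_smul_left (a : A) (x y : E) : inner A (x <• a) y = star a * inner A x y := by
  rw [← cm_star_inner y, CStarModuleRight.inner_op_smul_right, star_mul, cm_star_inner]

private lemma cm_inner_self {x : E} : inner A x x = 0 ↔ x = 0 :=
  CStarModuleRight.inner_self

private lemma cm_norm_sq_eq (x : E) : ‖x‖ ^ 2 = ‖(inner A x x : A)‖ := by
  rw [CStarModuleRight.norm_eq_sqrt_norm_inner_self (A := A) x, Real.sq_sqrt (norm_nonneg _)]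

end

open CStarModule in
private lemma ext_of_inner_right
    {A : Type*} [NonUnitalCStarAlgebra A] [PartialOrder A] [StarOrderedRing A]
    {E : Type*} [NormedAddCommGroup E] [Module ℂ E] [SMul Aᵐᵒᵖ E] [CStarModuleRight A E]
    {x y : E} (h : ∀ z : E, (inner A z x : A) = inner A z y) : x = y := by
  have h2 : (inner A (x - y) (x - y) : A) = 0 := by
    rw [cm_inner_sub_right, h (x - y), sub_self]
  exact sub_eq_zero.mp (cm_inner_self.mp h2)

/-- Let `f : M → A` be a bounded additive anti-`A`-linear functional on a Hilbert C*-module `M`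
over `A`, let `k ∈ M`, and define `T : M → M` by `T m = k · (f m)*`. Then `T` is an `A`-operator
with `⟪T m, n⟫ = f m · ⟪k, n⟫` for all `m, n`. Moreover, if no nonzero `a ∈ A` is such that the
functional `m ↦ f m · a` is represented by an element of `M`, and `k ≠ 0`, then `T` is not
`J`-adjointable for any essential closed two-sided ideal `J ⊆ A`. -/
theorem rankOne_functional_not_JAdjointable
    {A : Type*} [NonUnitalCStarAlgebra A] [PartialOrder A] [StarOrderedRing A]
    {E : Type*} [NormedAddCommGroup E] [Module ℂ E] [SMul Aᵐᵒᵖ E] [CStarModuleRight A E]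
    [CompleteSpace E]
    (f : E → A)
    (hf_add : ∀ m n : E, f (m + n) = f m + f n)
    (hf_bdd : ∃ C : ℝ, ∀ m : E, ‖f m‖ ≤ C * ‖m‖)
    (hf_antilin : ∀ (m : E) (a : A), f (m <• a) = star a * f m)
    (k : E) (T : E → E) (hT_def : ∀ m : E, T m = k <• star (f m)) :
    ((∀ m n : E, T (m + n) = T m + T n) ∧
     (∃ C : ℝ, ∀ m : E, ‖T m‖ ≤ C * ‖m‖) ∧
     (∀ (m : E) (a : A), T (m <• a) = T m <• a) ∧
     (∀ m n : E, (inner A (T m) n : A) = f m * inner A k n)) ∧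
    ((∀ a : A, (∃ m₀ : E, ∀ m : E, f m * a = (inner A m m₀ : A)) → a = 0) → k ≠ 0 →
      ∀ J : TwoSidedIdeal A, IsClosed (J : Set A) →
        (∀ a : A, (∀ x ∈ J, a * x = 0) → a = 0) →
        ¬ (∀ (n : E), ∀ x ∈ J, ∃ m₀ : E, ∀ m : E,
            (inner A (T m) n : A) * x = inner A m m₀)) := by
  have key : ∀ m n : E, (inner A (T m) n : A) = f m * inner A k n := by
    intro m n
    rw [hT_def m, cm_inner_op_smul_left, star_star]
  constructor
  · refine ⟨?_, ?_, ?_, key⟩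
    · intro m n
      apply ext_of_inner_right (A := A)
      intro z
      rw [← cm_star_inner (T (m + n)) z, key,
        ← cm_star_inner (T m + T n) z, cm_inner_add_left, key, key, hf_add]
      simp [star_add, star_mul, mul_add]
    · obtain ⟨C, hC⟩ := hf_bdd
      refine ⟨‖k‖ * C, fun m => ?_⟩
      have h1 : ‖T m‖ ^ 2 = ‖(inner A (T m) (T m) : A)‖ := cm_norm_sq_eq (T m)
      have h2 : ‖(inner A (T m) (T m) : A)‖ ≤ (‖f m‖ * ‖k‖) ^ 2 := by
        rw [key, hT_def m, CStarModuleRight.inner_op_smul_right, ← mul_assoc]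
        calc ‖f m * inner A k k * star (f m)‖ ≤ ‖f m * inner A k k‖ * ‖star (f m)‖ :=
              norm_mul_le _ _
          _ ≤ ‖f m‖ * ‖(inner A k k : A)‖ * ‖star (f m)‖ := by
              gcongr; exact norm_mul_le _ _
          _ = (‖f m‖ * ‖k‖) ^ 2 := by rw [norm_star, ← cm_norm_sq_eq k]; ring
      have hle : ‖T m‖ ≤ ‖f m‖ * ‖k‖ := by
        have := mul_nonneg (norm_nonneg (f m)) (norm_nonneg k)
        nlinarith [norm_nonneg (T m)]
      calc ‖T m‖ ≤ ‖f m‖ * ‖k‖ := hle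
          _ ≤ (C * ‖m‖) * ‖k‖ := by
              have := hC m
              have hk : (0:ℝ) ≤ ‖k‖ := norm_nonneg _
              nlinarith
          _ = ‖k‖ * C * ‖m‖ := by ring
    · intro m a
      apply ext_of_inner_right (A := A)
      intro z
      rw [← cm_star_inner (T (m <• a)) z, ← cm_star_inner (T m <• a) z,
        cm_inner_op_smul_left, key, key, hf_antilin]
      simp [star_mul, star_star, mul_assoc]
  · intro hrep hk J _hJclosed hJess hadj
    apply hk
    have hkk : ∀ n : E, ∀ x ∈ J, (inner A k n : A) * x = 0 := by
      intro n x hx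
      obtain ⟨m₀, hm₀⟩ := hadj n x hx
      apply hrep
      refine ⟨m₀, fun m => ?_⟩
      have := hm₀ m
      rw [key, mul_assoc] at this
      exact this
    have : (inner A k k : A) = 0 := hJess _ (hkk k)
    exact cm_inner_self.mp this
end

section
/- Let A be a C*-algebra, J ⊆ A a closed two-sided ideal, M a Hilbert C*-module over A, and let f, g : M → A be bounded additive anti-A-linear maps (f(m·a) = a*·f(m)) such that for every x ∈ J there exist elements f_x, g_x ∈ M with f(m)·x = ⟪m, f_x⟫ and g(m)·x = ⟪m, g_x⟫ for all m ∈ M. Define λ : J → A by λ(x) = g(f_x)* and ρ : J → A by ρ(x) = f(g_{x*}). Then λ is a left centralizer and ρ is a right centralizer of J compatible as a double centralizer: λ(x·y) = λ(x)·y, ρ(x·y) = x·ρ(y), and x·λ(y) = ρ(x)·y for all x, y ∈ J. -/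
open scoped RightActions

section StarClosed

variable {A : Type*} [NonUnitalCStarAlgebra A] [PartialOrder A] [StarOrderedRing A]

/-- Approximation lemma: for any `x` and `δ > 0` there is `u` (built from `star x * x` by the
functional calculus) with `δ • u = b - b * u` (where `b = star x * x`) and `‖x - x * u‖ ^ 2 ≤ δ`. -/
lemma cstar_approx (x : A) {δ : ℝ} (hδ : 0 < δ) :
    ∃ u : A, (δ • u = star x * x - (star x * x) * u) ∧ ‖x - x * u‖ ^ 2 ≤ δ := by
  set b : A := star x * x with hb_def
  have hb0 : (0 : A) ≤ b := star_mul_self_nonneg x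
  have hbsa : IsSelfAdjoint b := .of_nonneg hb0
  have hspec : ∀ t ∈ quasispectrum ℝ b, 0 ≤ t := quasispectrum_nonneg_of_nonneg b hb0
  set f : ℝ → ℝ := fun t => t / (t + δ) with hf_def
  have hfc : ContinuousOn f (quasispectrum ℝ b) := by
    apply ContinuousOn.div continuousOn_id (by fun_prop)
    intro t ht
    have := hspec t ht
    positivity
  have hf0 : f 0 = 0 := by simp [hf_def]
  have hidc : ContinuousOn (fun t : ℝ => t) (quasispectrum ℝ b) := continuousOn_id
  set u : A := cfcₙ f b with hu_def
  have husa : IsSelfAdjoint u := cfcₙ_predicate f b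
  have hmul1 : cfcₙ (fun t => t * f t) b = b * u := by
    rw [cfcₙ_mul _ _ b hidc (by simp) hfc hf0, cfcₙ_id' ℝ b]
  have hmul2 : cfcₙ (fun t => f t * t) b = u * b := by
    rw [cfcₙ_mul _ _ b hfc hf0 hidc (by simp), cfcₙ_id' ℝ b]
  have hmul3 : cfcₙ (fun t => f t * (t * f t)) b = u * (b * u) := by
    rw [cfcₙ_mul f (fun t => t * f t) b hfc hf0 (hidc.mul hfc) (by simp [hf0]), hmul1]
  refine ⟨u, ?_, ?_⟩
  · have : cfcₙ (fun t => δ * f t) b = cfcₙ (fun t => t - t * f t) b := by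
      apply cfcₙ_congr
      intro t ht
      have ht0 := hspec t ht
      have htδ : t + δ ≠ 0 := by positivity
      have key : t / (t + δ) * (t + δ) = t := div_mul_cancel₀ t htδ
      show δ * (t / (t + δ)) = t - t * (t / (t + δ))
      linear_combination key
    rw [cfcₙ_const_mul δ f b hfc hf0, cfcₙ_sub (fun t => t) (fun t => t * f t) b hidc (by simp) (hidc.mul hfc) (by simp [hf0]),
      cfcₙ_id' ℝ b, hmul1] at this
    exact this
  · set y : A := x - x * u with hy_def
    have hyy : star y * y = cfcₙ (fun t => t - t * f t - f t * t + f t * (t * f t)) b := by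
      have hsy : star y = star x - u * star x := by
        simp [hy_def, star_mul, husa.star_eq]
      have expand : (star x - u * star x) * (x - x * u)
          = b - b * u - u * b + u * (b * u) := by
        simp only [hb_def]
        noncomm_ring
      rw [hsy, hy_def, expand]
      rw [cfcₙ_add (fun t => t - t * f t - f t * t) (fun t => f t * (t * f t)) b (hidc.sub (hidc.mul hfc) |>.sub (hfc.mul hidc)) (by simp [hf0])
          (hfc.mul (hidc.mul hfc)) (by simp [hf0]),
        cfcₙ_sub (fun t => t - t * f t) (fun t => f t * t) b (hidc.sub (hidc.mul hfc)) (by simp [hf0]) (hfc.mul hidc) (by simp [hf0]),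
        cfcₙ_sub (fun t => t) (fun t => t * f t) b hidc (by simp) (hidc.mul hfc) (by simp [hf0]),
        cfcₙ_id' ℝ b, hmul1, hmul2, hmul3]
    have hnorm : ‖star y * y‖ ≤ δ := by
      rw [hyy]
      apply norm_cfcₙ_le
      intro t ht
      have ht0 := hspec t ht
      have htδ : (0:ℝ) < t + δ := by positivity
      have : t - t * f t - f t * t + f t * (t * f t) = t * δ ^ 2 / (t + δ) ^ 2 := by
        have key : t / (t + δ) * (t + δ) = t := div_mul_cancel₀ t htδ.ne'
        show t - t * (t / (t + δ)) - (t / (t + δ)) * t + (t / (t + δ)) * (t * (t / (t + δ)))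
          = t * δ ^ 2 / (t + δ) ^ 2
        rw [eq_div_iff (by positivity)]
        linear_combination (-t * (2 * (t + δ) - t / (t + δ) * (t + δ) - t)) * key
      rw [this, Real.norm_eq_abs, abs_of_nonneg (by positivity), div_le_iff₀ (by positivity)]
      nlinarith [mul_nonneg (mul_nonneg hδ.le ht0) ht0, mul_nonneg (mul_nonneg ht0 hδ.le) hδ.le,
        pow_pos hδ 3, sq_nonneg (t + δ)]
    calc ‖y‖ ^ 2 = ‖star y * y‖ := by rw [CStarRing.norm_star_mul_self, sq]
      _ ≤ δ := hnorm

lemma TwoSidedIdeal.rsmul_mem_of_isClosed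
    (J : TwoSidedIdeal A) (hJ : IsClosed (J : Set A)) (r : ℝ) {x : A} (hx : x ∈ J) :
    r • x ∈ J := by
  rcases eq_or_ne r 0 with rfl | hr
  · simpa using J.zero_mem
  have : r • x ∈ closure (J : Set A) := by
    rw [Metric.mem_closure_iff]
    intro ε hε
    have hδ : (0:ℝ) < (ε / |r|) ^ 2 / 2 := by
      have : (0:ℝ) < |r| := abs_pos.mpr hr
      positivity
    obtain ⟨u, -, hu⟩ := cstar_approx x hδ
    refine ⟨x * (r • u), J.mul_mem_right _ _ hx, ?_⟩
    rw [dist_eq_norm]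
    have h1 : r • x - x * (r • u) = r • (x - x * u) := by
      rw [smul_sub, mul_smul_comm]
    rw [h1, norm_smul, Real.norm_eq_abs]
    have habs : (0:ℝ) < |r| := abs_pos.mpr hr
    have h2 : ‖x - x * u‖ < ε / |r| := by
      nlinarith [norm_nonneg (x - x * u), div_pos hε habs]
    calc |r| * ‖x - x * u‖ < |r| * (ε / |r|) := by
          exact mul_lt_mul_of_pos_left h2 habs
      _ = ε := by field_simp
  rwa [hJ.closure_eq] at this

lemma TwoSidedIdeal.star_mem_of_isClosed
    (J : TwoSidedIdeal A) (hJ : IsClosed (J : Set A)) {a : A} (ha : a ∈ J) :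
    star a ∈ J := by
  have : star a ∈ closure (J : Set A) := by
    rw [Metric.mem_closure_iff]
    intro ε hε
    have hδ : (0:ℝ) < ε ^ 2 / 2 := by positivity
    obtain ⟨u, hid, hu⟩ := cstar_approx (star a) hδ
    rw [star_star] at hid
    have hb : a * star a ∈ J := J.mul_mem_right _ _ ha
    have huJ : u ∈ J := by
      have : u = (ε ^ 2 / 2)⁻¹ • ((ε ^ 2 / 2) • u) := by
        rw [smul_smul, inv_mul_cancel₀ hδ.ne', one_smul]
      rw [this, hid]
      exact J.rsmul_mem_of_isClosed hJ _ (J.sub_mem hb (J.mul_mem_right _ _ hb))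
    refine ⟨star a * u, J.mul_mem_left _ _ huJ, ?_⟩
    rw [dist_eq_norm]
    nlinarith [norm_nonneg (star a - star a * u)]
  rwa [hJ.closure_eq] at this

end StarClosed

/-- Let `J ⊆ A` be a closed two-sided ideal, `M` a Hilbert C*-module over `A`, and let
`f, g : M → A` be bounded additive anti-`A`-linear functionals such that for every `x ∈ J`
the functionals `f·x` and `g·x` are represented by elements `fRep x` and `gRep x` of `M`.
Then `λ x = (g (fRep x))*` is a left centralizer and `ρ x = f (gRep x*)` is a right centralizer
of `J`, compatible as a double centralizer: `λ(xy) = λ(x)·y`, `ρ(xy) = x·ρ(y)` and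
`x·λ(y) = ρ(x)·y` for all `x, y ∈ J`. -/
theorem double_centralizer_of_functionals
    {A : Type*} [NonUnitalCStarAlgebra A] [PartialOrder A] [StarOrderedRing A]
    {E : Type*} [NormedAddCommGroup E] [Module ℂ E] [SMul Aᵐᵒᵖ E] [CStarModuleRight A E]
    [CompleteSpace E]
    (J : TwoSidedIdeal A) (hJclosed : IsClosed (J : Set A))
    (f g : E → A)
    (hf_add : ∀ m n : E, f (m + n) = f m + f n)
    (hf_bdd : ∃ C : ℝ, ∀ m : E, ‖f m‖ ≤ C * ‖m‖)
    (hf_antilin : ∀ (m : E) (a : A), f (m <• a) = star a * f m)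
    (hg_add : ∀ m n : E, g (m + n) = g m + g n)
    (hg_bdd : ∃ C : ℝ, ∀ m : E, ‖g m‖ ≤ C * ‖m‖)
    (hg_antilin : ∀ (m : E) (a : A), g (m <• a) = star a * g m)
    (fRep gRep : A → E)
    (hfRep : ∀ x ∈ J, ∀ m : E, f m * x = (inner A m (fRep x) : A))
    (hgRep : ∀ x ∈ J, ∀ m : E, g m * x = (inner A m (gRep x) : A))
    (lam rho : A → A)
    (hlam : ∀ x : A, lam x = star (g (fRep x)))
    (hrho : ∀ x : A, rho x = f (gRep (star x))) :
    (∀ x ∈ J, ∀ y ∈ J, lam (x * y) = lam x * y) ∧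
    (∀ x ∈ J, ∀ y ∈ J, rho (x * y) = x * rho y) ∧
    (∀ x ∈ J, ∀ y ∈ J, x * lam y = rho x * y) := by
  have hstar : ∀ x ∈ J, star x ∈ J := fun x hx => J.star_mem_of_isClosed hJclosed hx
  -- nondegeneracy of the inner product
  have ext_eq : ∀ u v : E, (∀ m : E, inner A m u = inner A m v) → u = v := by
    intro u v h
    have hsub : ∀ x y z : E, inner A x (y - z) = inner A x y - inner A x z := by
      intro x y z
      have := CStarModuleRight.inner_add_right (A := A) (x := x) (y := y - z) (z := z)
      rw [sub_add_cancel] at this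
      rw [this, add_sub_cancel_right]
    have h0 : inner A (u - v) (u - v) = 0 := by
      rw [hsub, h (u - v), sub_self]
    exact sub_eq_zero.mp (CStarModuleRight.inner_self.mp h0)
  refine ⟨?_, ?_, ?_⟩
  · intro x hx y hy
    have hxy : x * y ∈ J := J.mul_mem_right _ _ hx
    have hrep : fRep (x * y) = fRep x <• y := by
      apply ext_eq
      intro m
      rw [← hfRep _ hxy m, CStarModuleRight.inner_op_smul_right, ← hfRep _ hx m, mul_assoc]
    rw [hlam, hlam, hrep, hg_antilin, star_mul, star_star]
  · intro x hx y hy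
    have hsx := hstar x hx
    have hsy := hstar y hy
    have hs_xy : star y * star x ∈ J := J.mul_mem_right _ _ hsy
    have hrep : gRep (star (x * y)) = gRep (star y) <• star x := by
      apply ext_eq
      intro m
      rw [star_mul, ← hgRep _ hs_xy m, CStarModuleRight.inner_op_smul_right, ← hgRep _ hsy m,
        mul_assoc]
    rw [hrho, hrho, hrep, hf_antilin, star_star]
  · intro x hx y hy
    have hsx := hstar x hx
    rw [hlam, hrho]
    calc x * star (g (fRep y)) = star (g (fRep y) * star x) := by rw [star_mul, star_star]
      _ = star (inner A (fRep y) (gRep (star x))) := by rw [hgRep _ hsx (fRep y)]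
      _ = inner A (gRep (star x)) (fRep y) := CStarModuleRight.star_inner _ _
      _ = f (gRep (star x)) * y := (hfRep _ hy _).symm
end
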